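/- arXiv:2604.19067 — 3 statements merged into one kernel-verified Lean document; each statement's English description precedes it below -/
import Mathlib

section
/- In the geometric block model G_n(r_s, r_d) with 0 ≤ r_d ≤ r_s ≤ 1/4, define for each ordered triple (i,j,k) of pairwise distinct vertices the centered triangle variable Δ̄_{ijk} = A_ij A_jk A_ki − E[A_ij A_jk A_ki]. If (i,j,k) and (i₁,j₁,k₁) are two ordered triples of pairwise distinct vertices whose underlying vertex sets {i,j,k} and {i₁,j₁,k₁} have at most one element in common, then E[Δ̄_{ijk} · Δ̄_{i₁j₁k₁}] = 0. -/
open MeasureTheory Finset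

noncomputable section

/-- The periodic distance on `[0,1]`: `d(u,v) = min(|u-v|, 1-|u-v|)`. -/
def pdist (u v : ℝ) : ℝ := min |u - v| (1 - |u - v|)

/-- The law of `(X_1, …, X_n)`: the product of `n` uniform measures on `[0,1]`. -/
def gbmMeasure (n : ℕ) : Measure (Fin n → ℝ) :=
  Measure.pi fun _ => volume.restrict (Set.Icc (0 : ℝ) 1)

/-- The adjacency matrix of the geometric block model `G_n(r_s, r_d)` with
communities `V₁ = {0,…,m-1}` and `V₂ = {m,…,n-1}`: `A i i = 0`, and for `i ≠ j`,
`A i j = 1[d(X_i,X_j) ≤ r_s]` if `i, j` are in the same community and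
`A i j = 1[d(X_i,X_j) ≤ r_d]` otherwise. -/
def gbmA (n m : ℕ) (rs rd : ℝ) (X : Fin n → ℝ) (i j : Fin n) : ℝ :=
  if i = j then 0
  else if ((i : ℕ) < m ↔ (j : ℕ) < m) then
    (if pdist (X i) (X j) ≤ rs then 1 else 0)
  else (if pdist (X i) (X j) ≤ rd then 1 else 0)

namespace GBM

/-! ### The uniform measure on `[0,1]` -/

def nu : Measure ℝ := volume.restrict (Set.Icc 0 1)

instance : IsProbabilityMeasure nu := ⟨by simp [nu, Real.volume_Icc]⟩

lemma integrable_of_bdd {α : Type*} [MeasurableSpace α] {μ : Measure α} [IsFiniteMeasure μ]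
    {f : α → ℝ} (hf : Measurable f) (hb : ∀ x, |f x| ≤ 1) : Integrable f μ :=
  ⟨hf.aestronglyMeasurable, HasFiniteIntegral.of_bounded (C := 1) (ae_of_all _ (by simpa using hb))⟩

lemma abs_mul_le_one {x y : ℝ} (hx : |x| ≤ 1) (hy : |y| ≤ 1) : |x * y| ≤ 1 := by
  rw [abs_mul]; exact mul_le_one₀ hx (abs_nonneg _) hy

/-! ### The circle indicator functions -/

def q (t : ℝ) : ℝ := min (Int.fract t) (1 - Int.fract t)
def B (r t : ℝ) : ℝ := if q t ≤ r then 1 else 0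
def TriF (r1 r2 r3 x y z : ℝ) : ℝ := B r1 (x - y) * B r2 (y - z) * B r3 (z - x)

lemma q_periodic : Function.Periodic q 1 := fun t => by simp [q, Int.fract_add_one]
lemma B_periodic (r : ℝ) : Function.Periodic (B r) 1 := fun t => by
  simp [B, q_periodic t]
lemma measurable_q : Measurable q := measurable_fract.min (measurable_const.sub measurable_fract)
lemma measurable_B (r : ℝ) : Measurable (B r) :=
  Measurable.ite (measurableSet_le measurable_q measurable_const) measurable_const measurable_const
lemma B_nonneg (r t : ℝ) : 0 ≤ B r t := by unfold B; split <;> norm_num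
lemma B_le_one (r t : ℝ) : B r t ≤ 1 := by unfold B; split <;> norm_num
lemma abs_B_le (r t : ℝ) : |B r t| ≤ 1 := by
  rw [abs_of_nonneg (B_nonneg r t)]; exact B_le_one r t
lemma abs_TriF_le (r1 r2 r3 x y z : ℝ) : |TriF r1 r2 r3 x y z| ≤ 1 := by
  unfold TriF
  exact abs_mul_le_one (abs_mul_le_one (abs_B_le _ _) (abs_B_le _ _)) (abs_B_le _ _)
lemma measurable_TriF {α : Type*} [MeasurableSpace α] {u v w : α → ℝ}
    (hu : Measurable u) (hv : Measurable v) (hw : Measurable w) (r1 r2 r3 : ℝ) :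
    Measurable fun x => TriF r1 r2 r3 (u x) (v x) (w x) :=
  (((measurable_B r1).comp (hu.sub hv)).mul ((measurable_B r2).comp (hv.sub hw))).mul
    ((measurable_B r3).comp (hw.sub hu))

lemma pdist_eq_q (u v : ℝ) (hu : u ∈ Set.Icc (0:ℝ) 1) (hv : v ∈ Set.Icc (0:ℝ) 1) :
    pdist u v = q (u - v) := by
  obtain ⟨hu0, hu1⟩ := hu; obtain ⟨hv0, hv1⟩ := hv
  unfold pdist q
  rcases lt_trichotomy (u - v) 0 with h | h | h
  · rcases eq_or_lt_of_le (show (-1:ℝ) ≤ u - v by linarith) with h1 | h1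
    · rw [← h1]
      rw [show ((-1:ℝ)) = ((-1 : ℤ) : ℝ) by norm_num, Int.fract_intCast]
      simp
    · have hf : Int.fract (u - v) = u - v + 1 := by
        rw [← Int.fract_add_one, Int.fract_eq_self.mpr ⟨by linarith, by linarith⟩]
      rw [hf, abs_of_neg h, min_comm]
      ring_nf
  · rw [h, abs_zero, Int.fract_zero]
  · rcases eq_or_lt_of_le (show u - v ≤ (1:ℝ) by linarith) with h1 | h1
    · rw [h1, show ((1:ℝ)) = ((1 : ℤ) : ℝ) by norm_num, Int.fract_intCast]
      simp
    · rw [Int.fract_eq_self.mpr ⟨by linarith, by linarith⟩, abs_of_pos h]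

/-! ### Translation invariance on the circle -/

lemma shift_integral (f : ℝ → ℝ) (hper : Function.Periodic f 1) (z : ℝ) :
    ∫ x, f (x + z) ∂nu = ∫ x, f x ∂nu := by
  have h1 : ∀ g : ℝ → ℝ, ∫ x, g x ∂nu = ∫ x in (0:ℝ)..1, g x := by
    intro g
    rw [intervalIntegral.integral_of_le zero_le_one, nu,
      ← MeasureTheory.integral_Icc_eq_integral_Ioc]
  rw [h1, h1, intervalIntegral.integral_comp_add_right]
  have h2 := hper.intervalIntegral_add_eq z 0
  simp only [zero_add] at h2
  rw [show (1:ℝ) + z = z + 1 by ring, show (0:ℝ) + z = z by ring]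
  exact h2

lemma TriF_translate (r1 r2 r3 x y z t : ℝ) :
    TriF r1 r2 r3 (x + t) (y + t) (z + t) = TriF r1 r2 r3 x y z := by
  unfold TriF
  rw [show x + t - (y + t) = x - y by ring, show y + t - (z + t) = y - z by ring,
    show z + t - (x + t) = z - x by ring]

lemma TriF_per1 (r1 r2 r3 x y z : ℝ) :
    TriF r1 r2 r3 (x + 1) y z = TriF r1 r2 r3 x y z := by
  unfold TriF
  have h3 : B r3 (z - (x + 1)) = B r3 (z - x) := by
    have h := B_periodic r3 (z - x - 1)
    rw [show z - x - 1 + 1 = z - x by ring] at h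
    rw [show z - (x + 1) = z - x - 1 by ring, h]
  rw [show x + 1 - y = (x - y) + 1 by ring, B_periodic r1 (x - y), h3]

lemma TriF_per2 (r1 r2 r3 x y z : ℝ) :
    TriF r1 r2 r3 x (y + 1) z = TriF r1 r2 r3 x y z := by
  unfold TriF
  have h1 : B r1 (x - (y + 1)) = B r1 (x - y) := by
    have h := B_periodic r1 (x - y - 1)
    rw [show x - y - 1 + 1 = x - y by ring] at h
    rw [show x - (y + 1) = x - y - 1 by ring, h]
  rw [h1, show y + 1 - z = (y - z) + 1 by ring, B_periodic r2 (y - z)]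

/-- The conditional triangle probability does not depend on the position of the
shared vertex: rotation invariance of the circle. -/
lemma Jconst (r1 r2 r3 z : ℝ) :
    (∫ x, ∫ y, TriF r1 r2 r3 x y z ∂nu ∂nu) = ∫ x, ∫ y, TriF r1 r2 r3 x y 0 ∂nu ∂nu := by
  have hin : ∀ x : ℝ, (∫ y, TriF r1 r2 r3 x y z ∂nu) = ∫ y, TriF r1 r2 r3 x (y + z) z ∂nu :=
    fun x => (shift_integral (fun y => TriF r1 r2 r3 x y z)
      (fun y => TriF_per2 r1 r2 r3 x y z) z).symm
  simp only [hin]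
  have hout : (∫ x, ∫ y, TriF r1 r2 r3 x (y + z) z ∂nu ∂nu)
      = ∫ x, ∫ y, TriF r1 r2 r3 (x + z) (y + z) z ∂nu ∂nu :=
    (shift_integral (fun x => ∫ y, TriF r1 r2 r3 x (y + z) z ∂nu)
      (fun x => integral_congr_ae (ae_of_all _ fun y => TriF_per1 r1 r2 r3 x (y + z) z)) z).symm
  rw [hout]
  have hpt : ∀ x y : ℝ, TriF r1 r2 r3 (x + z) (y + z) z = TriF r1 r2 r3 x y 0 := by
    intro x y
    have h := TriF_translate r1 r2 r3 x y 0 z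
    rwa [zero_add] at h
  simp only [hpt]

/-! ### Iterated integration over product measures -/

lemma peel {k : ℕ} (f : (Fin (k+1) → ℝ) → ℝ) (hf : Measurable f) (hb : ∀ x, |f x| ≤ 1) :
    ∫ X, f X ∂(Measure.pi fun _ : Fin (k+1) => nu)
      = ∫ z, ∫ W, f (Fin.cons z W) ∂(Measure.pi fun _ : Fin k => nu) ∂nu := by
  have h := measurePreserving_piFinSuccAbove (fun _ : Fin (k+1) => nu) 0
  set e := MeasurableEquiv.piFinSuccAbove (fun _ : Fin (k+1) => ℝ) 0 with he
  have hsymm : ∀ p : ℝ × (Fin k → ℝ), e.symm p = Fin.cons p.1 p.2 := by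
    intro p
    simp [he, MeasurableEquiv.piFinSuccAbove, Fin.insertNthEquiv, Fin.insertNth_zero']
  rw [← (MeasurePreserving.symm e h).integral_comp e.symm.measurableEmbedding f]
  rw [MeasureTheory.integral_prod]
  · exact integral_congr_ae (ae_of_all _ fun z => integral_congr_ae (ae_of_all _ fun W => by
      show f (e.symm (z, W)) = f (Fin.cons z W)
      exact congrArg f (hsymm (z, W))))
  · exact integrable_of_bdd (hf.comp e.symm.measurable) (fun p => hb _)

lemma int_pi_zero (c : ℝ) : ∫ _ : Fin 0 → ℝ, c ∂(Measure.pi fun _ : Fin 0 => nu) = c := by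
  simp

lemma measurable_cons {k : ℕ} (z : ℝ) :
    Measurable (fun W : Fin k → ℝ => (Fin.cons z W : Fin (k+1) → ℝ)) :=
  measurable_pi_lambda _ (fun i => Fin.cases measurable_const (fun j => measurable_pi_apply j) i)

lemma int_pi1 (g : ℝ → ℝ) (hg : Measurable fun W : Fin 1 → ℝ => g (W 0))
    (hb : ∀ x, |g x| ≤ 1) :
    ∫ W : Fin 1 → ℝ, g (W 0) ∂(Measure.pi fun _ : Fin 1 => nu) = ∫ x, g x ∂nu := by
  rw [peel (fun W : Fin 1 → ℝ => g (W 0)) hg (fun W => hb _)]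
  exact integral_congr_ae (ae_of_all _ fun x => int_pi_zero (g x))

lemma int_pi2 (g : ℝ → ℝ → ℝ) (hg : Measurable fun W : Fin 2 → ℝ => g (W 0) (W 1))
    (hb : ∀ x y, |g x y| ≤ 1) :
    ∫ W : Fin 2 → ℝ, g (W 0) (W 1) ∂(Measure.pi fun _ : Fin 2 => nu)
      = ∫ x, ∫ y, g x y ∂nu ∂nu := by
  rw [peel (fun W : Fin 2 → ℝ => g (W 0) (W 1)) hg (fun W => hb _ _)]
  refine integral_congr_ae (ae_of_all _ fun x => ?_)
  show (∫ W : Fin 1 → ℝ, g x (W 0) ∂(Measure.pi fun _ : Fin 1 => nu)) = _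
  exact int_pi1 (g x) (by exact hg.comp (measurable_cons x)) (hb x)

lemma int_pi3 (g : ℝ → ℝ → ℝ → ℝ)
    (hg : Measurable fun W : Fin 3 → ℝ => g (W 0) (W 1) (W 2))
    (hb : ∀ x y z, |g x y z| ≤ 1) :
    ∫ W : Fin 3 → ℝ, g (W 0) (W 1) (W 2) ∂(Measure.pi fun _ : Fin 3 => nu)
      = ∫ x, ∫ y, ∫ z, g x y z ∂nu ∂nu ∂nu := by
  rw [peel (fun W : Fin 3 → ℝ => g (W 0) (W 1) (W 2)) hg (fun W => hb _ _ _)]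
  refine integral_congr_ae (ae_of_all _ fun x => ?_)
  show (∫ W : Fin 2 → ℝ, g x (W 0) (W 1) ∂(Measure.pi fun _ : Fin 2 => nu)) = _
  exact int_pi2 (g x) (by exact hg.comp (measurable_cons x)) (hb x)

lemma int_pi4 (g : ℝ → ℝ → ℝ → ℝ → ℝ)
    (hg : Measurable fun W : Fin 4 → ℝ => g (W 0) (W 1) (W 2) (W 3))
    (hb : ∀ x y z w, |g x y z w| ≤ 1) :
    ∫ W : Fin 4 → ℝ, g (W 0) (W 1) (W 2) (W 3) ∂(Measure.pi fun _ : Fin 4 => nu)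
      = ∫ x, ∫ y, ∫ z, ∫ w, g x y z w ∂nu ∂nu ∂nu ∂nu := by
  rw [peel (fun W : Fin 4 → ℝ => g (W 0) (W 1) (W 2) (W 3)) hg (fun W => hb _ _ _ _)]
  refine integral_congr_ae (ae_of_all _ fun x => ?_)
  show (∫ W : Fin 3 → ℝ, g x (W 0) (W 1) (W 2) ∂(Measure.pi fun _ : Fin 3 => nu)) = _
  exact int_pi3 (g x) (by exact hg.comp (measurable_cons x)) (hb x)

lemma int_pi5 (g : ℝ → ℝ → ℝ → ℝ → ℝ → ℝ)
    (hg : Measurable fun W : Fin 5 → ℝ => g (W 0) (W 1) (W 2) (W 3) (W 4))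
    (hb : ∀ x y z w u, |g x y z w u| ≤ 1) :
    ∫ W : Fin 5 → ℝ, g (W 0) (W 1) (W 2) (W 3) (W 4) ∂(Measure.pi fun _ : Fin 5 => nu)
      = ∫ x, ∫ y, ∫ z, ∫ w, ∫ u, g x y z w u ∂nu ∂nu ∂nu ∂nu ∂nu := by
  rw [peel (fun W : Fin 5 → ℝ => g (W 0) (W 1) (W 2) (W 3) (W 4)) hg (fun W => hb _ _ _ _ _)]
  refine integral_congr_ae (ae_of_all _ fun x => ?_)
  show (∫ W : Fin 4 → ℝ, g x (W 0) (W 1) (W 2) (W 3) ∂(Measure.pi fun _ : Fin 4 => nu)) = _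
  exact int_pi4 (g x) (by exact hg.comp (measurable_cons x)) (hb x)

lemma int_pi6 (g : ℝ → ℝ → ℝ → ℝ → ℝ → ℝ → ℝ)
    (hg : Measurable fun W : Fin 6 → ℝ => g (W 0) (W 1) (W 2) (W 3) (W 4) (W 5))
    (hb : ∀ x y z w u t, |g x y z w u t| ≤ 1) :
    ∫ W : Fin 6 → ℝ, g (W 0) (W 1) (W 2) (W 3) (W 4) (W 5) ∂(Measure.pi fun _ : Fin 6 => nu)
      = ∫ x, ∫ y, ∫ z, ∫ w, ∫ u, ∫ t, g x y z w u t ∂nu ∂nu ∂nu ∂nu ∂nu ∂nu := by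
  rw [peel (fun W : Fin 6 → ℝ => g (W 0) (W 1) (W 2) (W 3) (W 4) (W 5)) hg
    (fun W => hb _ _ _ _ _ _)]
  refine integral_congr_ae (ae_of_all _ fun x => ?_)
  show (∫ W : Fin 5 → ℝ, g x (W 0) (W 1) (W 2) (W 3) (W 4)
      ∂(Measure.pi fun _ : Fin 5 => nu)) = _
  exact int_pi5 (g x) (by exact hg.comp (measurable_cons x)) (hb x)

/-! ### Pushforward of the product measure along injections -/

lemma map_comp_pi {d n : ℕ} (φ : Fin d → Fin n) (hφ : Function.Injective φ) :
    Measure.map (fun X : Fin n → ℝ => X ∘ φ) (Measure.pi fun _ => nu)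
      = (Measure.pi fun _ : Fin d => nu) := by
  classical
  refine (Measure.pi_eq fun s hs => ?_).symm
  have hmeas : Measurable (fun X : Fin n → ℝ => X ∘ φ) :=
    measurable_pi_lambda _ fun d => measurable_pi_apply (φ d)
  rw [Measure.map_apply hmeas (MeasurableSet.univ_pi hs)]
  set t : Fin n → Set ℝ := fun i => if h : ∃ d, φ d = i then s h.choose else Set.univ with ht
  have htφ : ∀ d, t (φ d) = s d := by
    intro d
    have hex : ∃ d', φ d' = φ d := ⟨d, rfl⟩
    simp only [ht, dif_pos hex]
    rw [hφ hex.choose_spec]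
  have hpre : (fun X : Fin n → ℝ => X ∘ φ) ⁻¹' (Set.univ.pi s) = Set.univ.pi t := by
    ext X
    simp only [Set.mem_preimage, Set.mem_univ_pi, Function.comp_apply]
    constructor
    · intro h i
      by_cases hex : ∃ d, φ d = i
      · simp only [ht, dif_pos hex]
        have := h hex.choose
        rwa [hex.choose_spec] at this
      · simp [ht, dif_neg hex]
    · intro h d
      have := h (φ d)
      rwa [htφ d] at this
  rw [hpre, Measure.pi_pi]
  calc ∏ i, nu (t i) = ∏ i ∈ Finset.univ.image φ, nu (t i) := by
        refine (Finset.prod_subset (Finset.subset_univ _) fun i _ hi => ?_).symm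
        have hex : ¬ ∃ d, φ d = i := by
          simpa [Finset.mem_image] using hi
        simp [ht, dif_neg hex]
    _ = ∏ d, nu (t (φ d)) := Finset.prod_image (fun a _ b _ h => hφ h)
    _ = ∏ d, nu (s d) := by simp [htφ]

lemma integral_comp_pi {d n : ℕ} (φ : Fin d → Fin n) (hφ : Function.Injective φ)
    {G : (Fin d → ℝ) → ℝ} (hG : Measurable G) :
    ∫ X, G (X ∘ φ) ∂(Measure.pi fun _ : Fin n => nu)
      = ∫ W, G W ∂(Measure.pi fun _ : Fin d => nu) := by
  have hmeas : Measurable (fun X : Fin n → ℝ => X ∘ φ) :=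
    measurable_pi_lambda _ fun d => measurable_pi_apply (φ d)
  rw [← map_comp_pi φ hφ, integral_map hmeas.aemeasurable hG.aestronglyMeasurable]

/-! ### Injectivity of tuples -/

lemma inj_cons {m n : ℕ} {a : Fin n} {u : Fin m → Fin n} (hu : Function.Injective u)
    (ha : ∀ t, a ≠ u t) : Function.Injective (Matrix.vecCons a u) := by
  intro p q h
  induction p using Fin.cases with
  | zero =>
    induction q using Fin.cases with
    | zero => rfl
    | succ j =>
      rw [Matrix.cons_val_zero, Matrix.cons_val_succ] at h
      exact absurd h (ha j)
  | succ i =>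
    induction q using Fin.cases with
    | zero =>
      rw [Matrix.cons_val_zero, Matrix.cons_val_succ] at h
      exact absurd h.symm (ha i)
    | succ j =>
      rw [Matrix.cons_val_succ, Matrix.cons_val_succ] at h
      rw [hu h]

lemma inj1 {n : ℕ} {a : Fin n} : Function.Injective ![a] :=
  fun p q _ => Subsingleton.elim p q

lemma inj3 {n : ℕ} {a b c : Fin n} (h1 : a≠b) (h2 : a≠c) (h3 : b≠c) :
    Function.Injective ![a,b,c] :=
  inj_cons (inj_cons inj1 (fun t => by fin_cases t <;> first | exact h3))
    (fun t => by fin_cases t <;> first | exact h1 | exact h2)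

lemma inj5 {n : ℕ} {a b c d e : Fin n} (h1 : a≠b) (h2 : a≠c) (h3 : a≠d) (h4 : a≠e)
    (h5 : b≠c) (h6 : b≠d) (h7 : b≠e) (h8 : c≠d) (h9 : c≠e) (h10 : d≠e) :
    Function.Injective ![a,b,c,d,e] :=
  inj_cons (inj_cons (inj_cons (inj_cons inj1
    (fun t => by fin_cases t <;> first | exact h10))
    (fun t => by fin_cases t <;> first | exact h8 | exact h9))
    (fun t => by fin_cases t <;> first | exact h5 | exact h6 | exact h7))
    (fun t => by fin_cases t <;> first | exact h1 | exact h2 | exact h3 | exact h4)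

lemma inj6 {n : ℕ} {a b c d e f : Fin n} (h1 : a≠b) (h2 : a≠c) (h3 : a≠d) (h4 : a≠e) (h5 : a≠f)
    (h6 : b≠c) (h7 : b≠d) (h8 : b≠e) (h9 : b≠f) (h10 : c≠d) (h11 : c≠e) (h12 : c≠f)
    (h13 : d≠e) (h14 : d≠f) (h15 : e≠f) :
    Function.Injective ![a,b,c,d,e,f] :=
  inj_cons (inj5 h6 h7 h8 h9 h10 h11 h12 h13 h14 h15)
    (fun t => by fin_cases t <;> first | exact h1 | exact h2 | exact h3 | exact h4 | exact h5)

/-! ### The triangle integrals -/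

lemma int_z_const (t1 t2 t3 : ℝ) :
    (∫ z, ∫ x, ∫ y, TriF t1 t2 t3 x y z ∂nu ∂nu ∂nu)
      = ∫ x, ∫ y, TriF t1 t2 t3 x y 0 ∂nu ∂nu := by
  simp only [Jconst t1 t2 t3]
  rw [integral_const, probReal_univ, one_smul]

lemma int_triple {n : ℕ} (a b v : Fin n) (hab : a ≠ b) (hav : a ≠ v) (hbv : b ≠ v)
    (r1 r2 r3 : ℝ) :
    ∫ X, TriF r1 r2 r3 (X a) (X b) (X v) ∂(Measure.pi fun _ : Fin n => nu)
      = ∫ x, ∫ y, TriF r1 r2 r3 x y 0 ∂nu ∂nu := by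
  have hinj : Function.Injective ![v, a, b] := inj3 hav.symm hbv.symm hab
  have hG : Measurable fun W : Fin 3 → ℝ => TriF r1 r2 r3 (W 1) (W 2) (W 0) :=
    measurable_TriF (measurable_pi_apply 1) (measurable_pi_apply 2) (measurable_pi_apply 0) _ _ _
  have h1 : (∫ X, TriF r1 r2 r3 (X a) (X b) (X v) ∂(Measure.pi fun _ : Fin n => nu))
      = ∫ W : Fin 3 → ℝ, TriF r1 r2 r3 (W 1) (W 2) (W 0) ∂(Measure.pi fun _ : Fin 3 => nu) :=
    integral_comp_pi ![v, a, b] hinj hG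
  have h2 : (∫ W : Fin 3 → ℝ, TriF r1 r2 r3 (W 1) (W 2) (W 0)
        ∂(Measure.pi fun _ : Fin 3 => nu))
      = ∫ z, ∫ x, ∫ y, TriF r1 r2 r3 x y z ∂nu ∂nu ∂nu :=
    int_pi3 (fun z x y => TriF r1 r2 r3 x y z) hG (fun _ _ _ => abs_TriF_le _ _ _ _ _ _)
  rw [h1, h2, int_z_const]

lemma key_shared {n : ℕ} (a b v a' b' : Fin n)
    (hab : a ≠ b) (hav : a ≠ v) (hbv : b ≠ v)
    (ha'b' : a' ≠ b') (ha'v : a' ≠ v) (hb'v : b' ≠ v)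
    (haa' : a ≠ a') (hab' : a ≠ b') (hba' : b ≠ a') (hbb' : b ≠ b')
    (r1 r2 r3 s1 s2 s3 : ℝ) :
    ∫ X, TriF r1 r2 r3 (X a) (X b) (X v) * TriF s1 s2 s3 (X a') (X b') (X v)
        ∂(Measure.pi fun _ : Fin n => nu)
      = (∫ X, TriF r1 r2 r3 (X a) (X b) (X v) ∂(Measure.pi fun _ : Fin n => nu))
        * ∫ X, TriF s1 s2 s3 (X a') (X b') (X v) ∂(Measure.pi fun _ : Fin n => nu) := by
  have hinj : Function.Injective ![v, a, b, a', b'] :=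
    inj5 hav.symm hbv.symm ha'v.symm hb'v.symm hab haa' hab' hba' hbb' ha'b'
  have hGm : Measurable fun W : Fin 5 → ℝ =>
      TriF r1 r2 r3 (W 1) (W 2) (W 0) * TriF s1 s2 s3 (W 3) (W 4) (W 0) :=
    (measurable_TriF (measurable_pi_apply 1) (measurable_pi_apply 2)
        (measurable_pi_apply 0) _ _ _).mul
      (measurable_TriF (measurable_pi_apply 3) (measurable_pi_apply 4)
        (measurable_pi_apply 0) _ _ _)
  have h1 : (∫ X, TriF r1 r2 r3 (X a) (X b) (X v) * TriF s1 s2 s3 (X a') (X b') (X v)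
        ∂(Measure.pi fun _ : Fin n => nu))
      = ∫ W : Fin 5 → ℝ, TriF r1 r2 r3 (W 1) (W 2) (W 0) * TriF s1 s2 s3 (W 3) (W 4) (W 0)
          ∂(Measure.pi fun _ : Fin 5 => nu) :=
    integral_comp_pi ![v, a, b, a', b'] hinj hGm
  have h2 : (∫ W : Fin 5 → ℝ, TriF r1 r2 r3 (W 1) (W 2) (W 0) * TriF s1 s2 s3 (W 3) (W 4) (W 0)
        ∂(Measure.pi fun _ : Fin 5 => nu))
      = ∫ z, ∫ x, ∫ y, ∫ x', ∫ y', TriF r1 r2 r3 x y z * TriF s1 s2 s3 x' y' z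
          ∂nu ∂nu ∂nu ∂nu ∂nu :=
    int_pi5 (fun z x y x' y' => TriF r1 r2 r3 x y z * TriF s1 s2 s3 x' y' z) hGm
      (fun _ _ _ _ _ => abs_mul_le_one (abs_TriF_le _ _ _ _ _ _) (abs_TriF_le _ _ _ _ _ _))
  rw [h1, h2]
  have hinner : ∀ z : ℝ,
      (∫ x, ∫ y, ∫ x', ∫ y', TriF r1 r2 r3 x y z * TriF s1 s2 s3 x' y' z ∂nu ∂nu ∂nu ∂nu)
        = (∫ x, ∫ y, TriF r1 r2 r3 x y 0 ∂nu ∂nu)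
          * ∫ x, ∫ y, TriF s1 s2 s3 x y 0 ∂nu ∂nu := by
    intro z
    have e1 : ∀ x y : ℝ,
        (∫ x', ∫ y', TriF r1 r2 r3 x y z * TriF s1 s2 s3 x' y' z ∂nu ∂nu)
          = TriF r1 r2 r3 x y z * ∫ x', ∫ y', TriF s1 s2 s3 x' y' z ∂nu ∂nu := by
      intro x y
      simp_rw [MeasureTheory.integral_const_mul]
    simp only [e1]
    simp_rw [MeasureTheory.integral_mul_const]
    rw [Jconst r1 r2 r3 z, Jconst s1 s2 s3 z]
  simp only [hinner]
  rw [integral_const, probReal_univ, one_smul,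
    int_triple a b v hab hav hbv r1 r2 r3, int_triple a' b' v ha'b' ha'v hb'v s1 s2 s3]

lemma key_disjoint {n : ℕ} (a b c a' b' c' : Fin n)
    (hab : a ≠ b) (hac : a ≠ c) (hbc : b ≠ c)
    (ha'b' : a' ≠ b') (ha'c' : a' ≠ c') (hb'c' : b' ≠ c')
    (haa' : a ≠ a') (hab' : a ≠ b') (hac' : a ≠ c')
    (hba' : b ≠ a') (hbb' : b ≠ b') (hbc' : b ≠ c')
    (hca' : c ≠ a') (hcb' : c ≠ b') (hcc' : c ≠ c')
    (r1 r2 r3 s1 s2 s3 : ℝ) :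
    ∫ X, TriF r1 r2 r3 (X a) (X b) (X c) * TriF s1 s2 s3 (X a') (X b') (X c')
        ∂(Measure.pi fun _ : Fin n => nu)
      = (∫ X, TriF r1 r2 r3 (X a) (X b) (X c) ∂(Measure.pi fun _ : Fin n => nu))
        * ∫ X, TriF s1 s2 s3 (X a') (X b') (X c') ∂(Measure.pi fun _ : Fin n => nu) := by
  have hinj : Function.Injective ![c, a, b, c', a', b'] :=
    inj6 hac.symm hbc.symm hcc' hca' hcb' hab hac' haa' hab' hbc' hba' hbb'
      ha'c'.symm hb'c'.symm ha'b'
  have hGm : Measurable fun W : Fin 6 → ℝ =>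
      TriF r1 r2 r3 (W 1) (W 2) (W 0) * TriF s1 s2 s3 (W 4) (W 5) (W 3) :=
    (measurable_TriF (measurable_pi_apply 1) (measurable_pi_apply 2)
        (measurable_pi_apply 0) _ _ _).mul
      (measurable_TriF (measurable_pi_apply 4) (measurable_pi_apply 5)
        (measurable_pi_apply 3) _ _ _)
  have h1 : (∫ X, TriF r1 r2 r3 (X a) (X b) (X c) * TriF s1 s2 s3 (X a') (X b') (X c')
        ∂(Measure.pi fun _ : Fin n => nu))
      = ∫ W : Fin 6 → ℝ, TriF r1 r2 r3 (W 1) (W 2) (W 0) * TriF s1 s2 s3 (W 4) (W 5) (W 3)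
          ∂(Measure.pi fun _ : Fin 6 => nu) :=
    integral_comp_pi ![c, a, b, c', a', b'] hinj hGm
  have h2 : (∫ W : Fin 6 → ℝ, TriF r1 r2 r3 (W 1) (W 2) (W 0) * TriF s1 s2 s3 (W 4) (W 5) (W 3)
        ∂(Measure.pi fun _ : Fin 6 => nu))
      = ∫ z, ∫ x, ∫ y, ∫ z', ∫ x', ∫ y', TriF r1 r2 r3 x y z * TriF s1 s2 s3 x' y' z'
          ∂nu ∂nu ∂nu ∂nu ∂nu ∂nu :=
    int_pi6 (fun z x y z' x' y' => TriF r1 r2 r3 x y z * TriF s1 s2 s3 x' y' z') hGm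
      (fun _ _ _ _ _ _ => abs_mul_le_one (abs_TriF_le _ _ _ _ _ _) (abs_TriF_le _ _ _ _ _ _))
  rw [h1, h2]
  have e1 : ∀ x y z : ℝ,
      (∫ z', ∫ x', ∫ y', TriF r1 r2 r3 x y z * TriF s1 s2 s3 x' y' z' ∂nu ∂nu ∂nu)
        = TriF r1 r2 r3 x y z
            * ∫ z', ∫ x', ∫ y', TriF s1 s2 s3 x' y' z' ∂nu ∂nu ∂nu := by
    intro x y z
    simp_rw [MeasureTheory.integral_const_mul]
  simp only [e1]
  simp_rw [MeasureTheory.integral_mul_const]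
  rw [int_z_const r1 r2 r3, int_z_const s1 s2 s3,
    int_triple a b c hab hac hbc r1 r2 r3, int_triple a' b' c' ha'b' ha'c' hb'c' s1 s2 s3]

/-! ### Rotating a triangle so that a chosen vertex comes last -/

lemma rotate_to {n : ℕ} (p q w vv : Fin n) (hv : vv = p ∨ vv = q ∨ vv = w)
    (hpq : p ≠ q) (hpw : p ≠ w) (hqw : q ≠ w) (r1 r2 r3 : ℝ) :
    ∃ a b R1 R2 R3, (a = p ∨ a = q ∨ a = w) ∧ (b = p ∨ b = q ∨ b = w) ∧
      a ≠ b ∧ a ≠ vv ∧ b ≠ vv ∧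
      ∀ f : Fin n → ℝ, TriF r1 r2 r3 (f p) (f q) (f w) = TriF R1 R2 R3 (f a) (f b) (f vv) := by
  rcases hv with rfl | rfl | rfl
  · exact ⟨q, w, r2, r3, r1, Or.inr (Or.inl rfl), Or.inr (Or.inr rfl), hqw,
      hpq.symm, hpw.symm, fun f => by unfold TriF; ring⟩
  · exact ⟨w, p, r3, r1, r2, Or.inr (Or.inr rfl), Or.inl rfl, hpw.symm,
      hqw.symm, hpq, fun f => by unfold TriF; ring⟩
  · exact ⟨p, q, r1, r2, r3, Or.inl rfl, Or.inr (Or.inl rfl), hpq,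
      hpw, hqw, fun f => rfl⟩

/-! ### Almost-everywhere membership in `[0,1]` -/

lemma ae_Icc (n : ℕ) :
    ∀ᵐ X ∂(Measure.pi fun _ : Fin n => nu), ∀ t, X t ∈ Set.Icc (0:ℝ) 1 := by
  rw [MeasureTheory.ae_all_iff]
  intro t
  rw [MeasureTheory.ae_iff]
  have heq : {X : Fin n → ℝ | ¬ X t ∈ Set.Icc (0:ℝ) 1}
      = Set.univ.pi (fun i => if i = t then (Set.Icc (0:ℝ) 1)ᶜ else Set.univ) := by
    ext X
    simp only [Set.mem_setOf_eq, Set.mem_pi, Set.mem_univ, forall_true_left]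
    constructor
    · intro h i
      by_cases hi : i = t
      · subst hi; simp [h]
      · simp [hi]
    · intro h
      have := h t
      simpa using this
  rw [heq, Measure.pi_pi]
  refine Finset.prod_eq_zero (Finset.mem_univ t) ?_
  rw [if_pos rfl]
  show nu (Set.Icc (0:ℝ) 1)ᶜ = 0
  rw [nu, Measure.restrict_apply measurableSet_Icc.compl]
  simp

/-! ### Identification of the adjacency entries -/

def Rc (m : ℕ) {n : ℕ} (rs rd : ℝ) (p q' : Fin n) : ℝ :=
  if ((p : ℕ) < m ↔ (q' : ℕ) < m) then rs else rd

lemma gbmA_eq {n : ℕ} (m : ℕ) (rs rd : ℝ) (p q' : Fin n) (hpq : p ≠ q') (X : Fin n → ℝ)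
    (hX : ∀ t, X t ∈ Set.Icc (0:ℝ) 1) :
    gbmA n m rs rd X p q' = B (Rc m rs rd p q') (X p - X q') := by
  unfold gbmA B Rc
  rw [if_neg hpq, ← pdist_eq_q (X p) (X q') (hX p) (hX q')]
  by_cases h : ((p : ℕ) < m ↔ (q' : ℕ) < m) <;> simp [h]

/-! ### The main orthogonality lemma at the level of `TriF` -/

lemma key_orth {n : ℕ} (i j k i₁ j₁ k₁ : Fin n)
    (hij : i ≠ j) (hik : i ≠ k) (hjk : j ≠ k)
    (hij₁ : i₁ ≠ j₁) (hik₁ : i₁ ≠ k₁) (hjk₁ : j₁ ≠ k₁)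
    (hshare : (({i, j, k} : Finset (Fin n)) ∩ ({i₁, j₁, k₁} : Finset (Fin n))).card ≤ 1)
    (r1 r2 r3 s1 s2 s3 : ℝ) :
    ∫ X, (TriF r1 r2 r3 (X i) (X j) (X k)
        - ∫ Y, TriF r1 r2 r3 (Y i) (Y j) (Y k) ∂(Measure.pi fun _ : Fin n => nu))
      * (TriF s1 s2 s3 (X i₁) (X j₁) (X k₁)
        - ∫ Y, TriF s1 s2 s3 (Y i₁) (Y j₁) (Y k₁) ∂(Measure.pi fun _ : Fin n => nu))
      ∂(Measure.pi fun _ : Fin n => nu) = 0 := by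
  classical
  have hQm : Measurable fun X : Fin n → ℝ => TriF r1 r2 r3 (X i) (X j) (X k) :=
    measurable_TriF (measurable_pi_apply i) (measurable_pi_apply j) (measurable_pi_apply k) _ _ _
  have hQ'm : Measurable fun X : Fin n → ℝ => TriF s1 s2 s3 (X i₁) (X j₁) (X k₁) :=
    measurable_TriF (measurable_pi_apply i₁) (measurable_pi_apply j₁)
      (measurable_pi_apply k₁) _ _ _
  have hQi : Integrable (fun X : Fin n → ℝ => TriF r1 r2 r3 (X i) (X j) (X k))
      (Measure.pi fun _ : Fin n => nu) :=
    integrable_of_bdd hQm (fun X => abs_TriF_le _ _ _ _ _ _)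
  have hQ'i : Integrable (fun X : Fin n → ℝ => TriF s1 s2 s3 (X i₁) (X j₁) (X k₁))
      (Measure.pi fun _ : Fin n => nu) :=
    integrable_of_bdd hQ'm (fun X => abs_TriF_le _ _ _ _ _ _)
  have hQQ'i : Integrable (fun X : Fin n → ℝ =>
      TriF r1 r2 r3 (X i) (X j) (X k) * TriF s1 s2 s3 (X i₁) (X j₁) (X k₁))
      (Measure.pi fun _ : Fin n => nu) :=
    integrable_of_bdd (hQm.mul hQ'm)
      (fun X => abs_mul_le_one (abs_TriF_le _ _ _ _ _ _) (abs_TriF_le _ _ _ _ _ _))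
  -- the product formula
  have hmul : ∫ X, TriF r1 r2 r3 (X i) (X j) (X k) * TriF s1 s2 s3 (X i₁) (X j₁) (X k₁)
        ∂(Measure.pi fun _ : Fin n => nu)
      = (∫ X, TriF r1 r2 r3 (X i) (X j) (X k) ∂(Measure.pi fun _ : Fin n => nu))
        * ∫ X, TriF s1 s2 s3 (X i₁) (X j₁) (X k₁) ∂(Measure.pi fun _ : Fin n => nu) := by
    by_cases hE : (({i, j, k} : Finset (Fin n)) ∩ ({i₁, j₁, k₁} : Finset (Fin n))) = ∅
    · have hni : ∀ x : Fin n, x ∈ ({i, j, k} : Finset (Fin n)) →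
          x ∈ ({i₁, j₁, k₁} : Finset (Fin n)) → False := by
        intro x h1 h2
        have hx : x ∈ (({i, j, k} : Finset (Fin n)) ∩ ({i₁, j₁, k₁} : Finset (Fin n))) :=
          Finset.mem_inter.mpr ⟨h1, h2⟩
        rw [hE] at hx
        exact absurd hx (Finset.notMem_empty x)
      exact key_disjoint i j k i₁ j₁ k₁ hij hik hjk hij₁ hik₁ hjk₁
        (fun h => hni i (by simp) (by simp [h]))
        (fun h => hni i (by simp) (by simp [h]))
        (fun h => hni i (by simp) (by simp [h]))
        (fun h => hni j (by simp) (by simp [h]))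
        (fun h => hni j (by simp) (by simp [h]))
        (fun h => hni j (by simp) (by simp [h]))
        (fun h => hni k (by simp) (by simp [h]))
        (fun h => hni k (by simp) (by simp [h]))
        (fun h => hni k (by simp) (by simp [h]))
        r1 r2 r3 s1 s2 s3
    · obtain ⟨v, hv⟩ := Finset.nonempty_of_ne_empty hE
      have huniq : ∀ x, x ∈ (({i, j, k} : Finset (Fin n)) ∩ ({i₁, j₁, k₁} : Finset (Fin n)))
          → x = v := fun x hx => Finset.card_le_one.mp hshare x hx v hv
      obtain ⟨hvS, hvS'⟩ := Finset.mem_inter.mp hv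
      have hvl : v = i ∨ v = j ∨ v = k := by simpa using hvS
      have hvl' : v = i₁ ∨ v = j₁ ∨ v = k₁ := by simpa using hvS'
      obtain ⟨a, b, R1, R2, R3, haS, hbS, hab, hav, hbv, hrot⟩ :=
        rotate_to i j k v hvl hij hik hjk r1 r2 r3
      obtain ⟨a', b', S1, S2, S3, haS', hbS', ha'b', ha'v, hb'v, hrot'⟩ :=
        rotate_to i₁ j₁ k₁ v hvl' hij₁ hik₁ hjk₁ s1 s2 s3
      have cross : ∀ x y : Fin n, (x = i ∨ x = j ∨ x = k) → x ≠ v →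
          (y = i₁ ∨ y = j₁ ∨ y = k₁) → x ≠ y := by
        intro x y hx hxv hy hxy
        apply hxv
        refine huniq x (Finset.mem_inter.mpr ⟨?_, ?_⟩)
        · rcases hx with rfl | rfl | rfl <;> simp
        · cases hxy
          rcases hy with rfl | rfl | rfl <;> simp
      simp only [hrot, hrot']
      exact key_shared a b v a' b' hab hav hbv ha'b' ha'v hb'v
        (cross a a' haS hav haS') (cross a b' haS hav hbS')
        (cross b a' hbS hbv haS') (cross b b' hbS hbv hbS')
        R1 R2 R3 S1 S2 S3
  -- expansion of the centered product
  set c1 := ∫ Y, TriF r1 r2 r3 (Y i) (Y j) (Y k) ∂(Measure.pi fun _ : Fin n => nu) with hc1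
  set c2 := ∫ Y, TriF s1 s2 s3 (Y i₁) (Y j₁) (Y k₁) ∂(Measure.pi fun _ : Fin n => nu) with hc2
  calc ∫ X, (TriF r1 r2 r3 (X i) (X j) (X k) - c1)
        * (TriF s1 s2 s3 (X i₁) (X j₁) (X k₁) - c2) ∂(Measure.pi fun _ : Fin n => nu)
      = ∫ X, (TriF r1 r2 r3 (X i) (X j) (X k) * TriF s1 s2 s3 (X i₁) (X j₁) (X k₁)
            - c1 * TriF s1 s2 s3 (X i₁) (X j₁) (X k₁))
          - (c2 * TriF r1 r2 r3 (X i) (X j) (X k) - c1 * c2)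
          ∂(Measure.pi fun _ : Fin n => nu) :=
        integral_congr_ae (ae_of_all _ fun X => by ring)
    _ = ((∫ X, TriF r1 r2 r3 (X i) (X j) (X k) * TriF s1 s2 s3 (X i₁) (X j₁) (X k₁)
            ∂(Measure.pi fun _ : Fin n => nu))
          - c1 * ∫ X, TriF s1 s2 s3 (X i₁) (X j₁) (X k₁) ∂(Measure.pi fun _ : Fin n => nu))
        - (c2 * (∫ X, TriF r1 r2 r3 (X i) (X j) (X k) ∂(Measure.pi fun _ : Fin n => nu))
          - c1 * c2) := by
        have I2 : Integrable (fun X : Fin n → ℝ => c1 * TriF s1 s2 s3 (X i₁) (X j₁) (X k₁))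
            (Measure.pi fun _ : Fin n => nu) := by exact hQ'i.const_mul c1
        have I3 : Integrable (fun X : Fin n → ℝ => c2 * TriF r1 r2 r3 (X i) (X j) (X k))
            (Measure.pi fun _ : Fin n => nu) := by exact hQi.const_mul c2
        have I1 : Integrable (fun X : Fin n → ℝ =>
            TriF r1 r2 r3 (X i) (X j) (X k) * TriF s1 s2 s3 (X i₁) (X j₁) (X k₁)
              - c1 * TriF s1 s2 s3 (X i₁) (X j₁) (X k₁))
            (Measure.pi fun _ : Fin n => nu) := by exact hQQ'i.sub I2
        have I4 : Integrable (fun X : Fin n → ℝ =>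
            c2 * TriF r1 r2 r3 (X i) (X j) (X k) - c1 * c2)
            (Measure.pi fun _ : Fin n => nu) := by exact I3.sub (integrable_const _)
        rw [integral_sub I1 I4, integral_sub hQQ'i I2,
          integral_sub I3 (integrable_const _),
          MeasureTheory.integral_const_mul, MeasureTheory.integral_const_mul,
          integral_const, probReal_univ, one_smul]
    _ = 0 := by
        rw [hmul, ← hc1, ← hc2]
        ring

end GBM

open GBM in
/-- If two ordered triples of pairwise distinct vertices share at most one vertex,
then the centered triangle variables `Δ̄_{ijk} = A_ij A_jk A_ki − E[A_ij A_jk A_ki]`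
are uncorrelated: `E[Δ̄_{ijk} · Δ̄_{i₁j₁k₁}] = 0`. -/
theorem centered_triangles_orthogonal (n : ℕ) (τ : ℝ) (hτ : τ ∈ Set.Icc (0 : ℝ) 1)
    (m : ℕ) (hm : (m : ℝ) = τ * n) (rs rd : ℝ)
    (hrd0 : 0 ≤ rd) (hds : rd ≤ rs) (hs4 : rs ≤ 1 / 4)
    (i j k i₁ j₁ k₁ : Fin n)
    (hij : i ≠ j) (hik : i ≠ k) (hjk : j ≠ k)
    (hij₁ : i₁ ≠ j₁) (hik₁ : i₁ ≠ k₁) (hjk₁ : j₁ ≠ k₁)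
    (hshare : (({i, j, k} : Finset (Fin n)) ∩ ({i₁, j₁, k₁} : Finset (Fin n))).card ≤ 1) :
    (∫ X,
        (gbmA n m rs rd X i j * gbmA n m rs rd X j k * gbmA n m rs rd X k i
          - ∫ Y, gbmA n m rs rd Y i j * gbmA n m rs rd Y j k * gbmA n m rs rd Y k i
              ∂gbmMeasure n)
      * (gbmA n m rs rd X i₁ j₁ * gbmA n m rs rd X j₁ k₁ * gbmA n m rs rd X k₁ i₁
          - ∫ Y, gbmA n m rs rd Y i₁ j₁ * gbmA n m rs rd Y j₁ k₁ * gbmA n m rs rd Y k₁ i₁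
              ∂gbmMeasure n)
      ∂gbmMeasure n) = 0 := by
  have hIcc : ∀ᵐ X ∂(gbmMeasure n), ∀ t, X t ∈ Set.Icc (0:ℝ) 1 := ae_Icc n
  have hTae : (fun X : Fin n → ℝ =>
        gbmA n m rs rd X i j * gbmA n m rs rd X j k * gbmA n m rs rd X k i)
      =ᵐ[gbmMeasure n] (fun X =>
        TriF (Rc m rs rd i j) (Rc m rs rd j k) (Rc m rs rd k i) (X i) (X j) (X k)) := by
    filter_upwards [hIcc] with X hX
    rw [gbmA_eq m rs rd i j hij X hX, gbmA_eq m rs rd j k hjk X hX,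
      gbmA_eq m rs rd k i hik.symm X hX]
    rfl
  have hT'ae : (fun X : Fin n → ℝ =>
        gbmA n m rs rd X i₁ j₁ * gbmA n m rs rd X j₁ k₁ * gbmA n m rs rd X k₁ i₁)
      =ᵐ[gbmMeasure n] (fun X =>
        TriF (Rc m rs rd i₁ j₁) (Rc m rs rd j₁ k₁) (Rc m rs rd k₁ i₁) (X i₁) (X j₁) (X k₁)) := by
    filter_upwards [hIcc] with X hX
    rw [gbmA_eq m rs rd i₁ j₁ hij₁ X hX, gbmA_eq m rs rd j₁ k₁ hjk₁ X hX,
      gbmA_eq m rs rd k₁ i₁ hik₁.symm X hX]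
    rfl
  have e1 : (∫ Y, gbmA n m rs rd Y i j * gbmA n m rs rd Y j k * gbmA n m rs rd Y k i
        ∂gbmMeasure n)
      = ∫ Y, TriF (Rc m rs rd i j) (Rc m rs rd j k) (Rc m rs rd k i) (Y i) (Y j) (Y k)
          ∂gbmMeasure n := integral_congr_ae hTae
  have e2 : (∫ Y, gbmA n m rs rd Y i₁ j₁ * gbmA n m rs rd Y j₁ k₁ * gbmA n m rs rd Y k₁ i₁
        ∂gbmMeasure n)
      = ∫ Y, TriF (Rc m rs rd i₁ j₁) (Rc m rs rd j₁ k₁) (Rc m rs rd k₁ i₁) (Y i₁) (Y j₁) (Y k₁)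
          ∂gbmMeasure n := integral_congr_ae hT'ae
  rw [e1, e2]
  have e3 : (∫ X,
        (gbmA n m rs rd X i j * gbmA n m rs rd X j k * gbmA n m rs rd X k i
          - ∫ Y, TriF (Rc m rs rd i j) (Rc m rs rd j k) (Rc m rs rd k i) (Y i) (Y j) (Y k)
              ∂gbmMeasure n)
      * (gbmA n m rs rd X i₁ j₁ * gbmA n m rs rd X j₁ k₁ * gbmA n m rs rd X k₁ i₁
          - ∫ Y, TriF (Rc m rs rd i₁ j₁) (Rc m rs rd j₁ k₁) (Rc m rs rd k₁ i₁) (Y i₁) (Y j₁)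
              (Y k₁) ∂gbmMeasure n)
      ∂gbmMeasure n)
      = ∫ X,
        (TriF (Rc m rs rd i j) (Rc m rs rd j k) (Rc m rs rd k i) (X i) (X j) (X k)
          - ∫ Y, TriF (Rc m rs rd i j) (Rc m rs rd j k) (Rc m rs rd k i) (Y i) (Y j) (Y k)
              ∂gbmMeasure n)
      * (TriF (Rc m rs rd i₁ j₁) (Rc m rs rd j₁ k₁) (Rc m rs rd k₁ i₁) (X i₁) (X j₁) (X k₁)
          - ∫ Y, TriF (Rc m rs rd i₁ j₁) (Rc m rs rd j₁ k₁) (Rc m rs rd k₁ i₁) (Y i₁) (Y j₁)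
              (Y k₁) ∂gbmMeasure n)
      ∂gbmMeasure n := by
    refine integral_congr_ae ?_
    filter_upwards [hTae, hT'ae] with X h1 h2
    rw [h1, h2]
  rw [e3]
  exact key_orth i j k i₁ j₁ k₁ hij hik hjk hij₁ hik₁ hjk₁ hshare
    (Rc m rs rd i j) (Rc m rs rd j k) (Rc m rs rd k i)
    (Rc m rs rd i₁ j₁) (Rc m rs rd j₁ k₁) (Rc m rs rd k₁ i₁)
end
end

section
/- There exists an absolute constant C > 0 such that for every geometric block model G_n(r_s, r_d) with 0 ≤ r_d ≤ r_s ≤ 1/4, the centered number of ordered 2-paths P_n = Σ_{i≠j≠k} (A_ij A_jk − E[A_ij A_jk]) (sum over ordered triples of pairwise distinct vertices) satisfies E[P_n²] ≤ C·(n⁴ r_s³ + n³ r_s²). -/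
open MeasureTheory Finset

noncomputable section

open scoped ENNReal

namespace GBMaux

def μ0 : Measure ℝ := volume.restrict (Set.Icc (0 : ℝ) 1)

instance : IsProbabilityMeasure μ0 := by
  constructor; simp [μ0, Real.volume_Icc]

def eK (r : ℝ) (u v : ℝ) : ℝ≥0∞ :=
  if u ∈ Set.Icc (0:ℝ) 1 ∧ v ∈ Set.Icc (0:ℝ) 1 ∧ pdist u v ≤ r then 1 else 0

def iK (u : ℝ) : ℝ≥0∞ := if u ∈ Set.Icc (0:ℝ) 1 then 1 else 0

lemma measurable_eK (r : ℝ) : Measurable (fun p : ℝ × ℝ => eK r p.1 p.2) := by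
  unfold eK
  apply Measurable.ite _ measurable_const measurable_const
  apply MeasurableSet.inter
  · exact measurable_fst measurableSet_Icc
  apply MeasurableSet.inter
  · exact measurable_snd measurableSet_Icc
  · have : Continuous fun p : ℝ × ℝ => pdist p.1 p.2 := by
      unfold pdist; fun_prop
    exact measurableSet_le this.measurable measurable_const

lemma measurable_iK : Measurable iK :=
  Measurable.ite measurableSet_Icc measurable_const measurable_const

lemma iK_mul_eK (r u v : ℝ) : iK v * eK r u v = eK r u v := by
  unfold iK eK
  by_cases h : v ∈ Set.Icc (0:ℝ) 1 <;> simp [h]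

lemma iK_mul_iK (u : ℝ) : iK u * iK u = iK u := by
  unfold iK; split <;> simp

lemma key1 {r : ℝ} (hr0 : 0 ≤ r) (hr : r ≤ 1/4) (x : ℝ) :
    ∫⁻ y, eK r x y ∂μ0 = ENNReal.ofReal (2*r) * iK x := by
  by_cases hx : x ∈ Set.Icc (0:ℝ) 1
  swap
  · simp [eK, iK, hx]
  obtain ⟨hx0, hx1⟩ := hx
  have hiK : iK x = 1 := by simp [iK, hx0, hx1]
  rw [hiK, mul_one]
  set S : Set ℝ := {y | y ∈ Set.Icc (0:ℝ) 1 ∧ pdist x y ≤ r} with hS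
  have hSeq : S = Set.Icc (max 0 (x-r)) (min 1 (x+r)) ∪
      (Set.Icc 0 (x-1+r) ∪ Set.Icc (x+1-r) 1) := by
    ext y
    simp only [hS, Set.mem_setOf_eq, Set.mem_Icc, Set.mem_union]
    constructor
    · rintro ⟨⟨hy0, hy1⟩, hmin⟩
      rcases min_le_iff.1 hmin with h | h
      · have h2 := abs_le.1 h
        exact Or.inl ⟨max_le hy0 (by linarith [h2.2]), le_min hy1 (by linarith [h2.1])⟩
      · rcases le_abs.1 (by linarith : (1:ℝ)-r ≤ |x - y|) with h2 | h2
        · exact Or.inr (Or.inl ⟨hy0, by linarith⟩)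
        · exact Or.inr (Or.inr ⟨by linarith, hy1⟩)
    · rintro (⟨hl, hu⟩ | ⟨hl, hu⟩ | ⟨hl, hu⟩)
      · have h1 : x - r ≤ y := le_trans (le_max_right _ _) hl
        have h0 : (0:ℝ) ≤ y := le_trans (le_max_left _ _) hl
        have h2 : y ≤ x + r := le_trans hu (min_le_right _ _)
        have h3 : y ≤ 1 := le_trans hu (min_le_left _ _)
        exact ⟨⟨h0, h3⟩, min_le_iff.2 (Or.inl (abs_le.2 ⟨by linarith, by linarith⟩))⟩
      · refine ⟨⟨hl, by linarith⟩, min_le_iff.2 (Or.inr ?_)⟩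
        rw [abs_of_nonneg (by linarith : (0:ℝ) ≤ x - y)]
        linarith
      · refine ⟨⟨by linarith, hu⟩, min_le_iff.2 (Or.inr ?_)⟩
        rw [abs_of_nonpos (by linarith : x - y ≤ 0)]
        linarith
  have hmeas : MeasurableSet S := by
    rw [hSeq]
    exact ((measurableSet_Icc).union (measurableSet_Icc.union measurableSet_Icc))
  have heq : ∀ y, eK r x y = S.indicator (fun _ => (1:ℝ≥0∞)) y := by
    intro y
    simp only [eK, hS, Set.indicator_apply, Set.mem_setOf_eq]
    by_cases h : y ∈ Set.Icc (0:ℝ) 1 ∧ pdist x y ≤ r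
    · simp [h.1, h.2, hx0, hx1, h]
    · rw [if_neg h, if_neg]
      rintro ⟨_, h1, h2⟩; exact h ⟨h1, h2⟩
  simp_rw [heq]
  rw [lintegral_indicator hmeas]
  simp only [lintegral_one, Measure.restrict_apply MeasurableSet.univ, Set.univ_inter]
  have hSsub : S ⊆ Set.Icc (0:ℝ) 1 := fun y hy => hy.1
  rw [μ0, Measure.restrict_apply hmeas, Set.inter_eq_left.2 hSsub, hSeq]
  -- disjointness
  have d1 : x - 1 + r < max 0 (x - r) := by
    rcases le_or_gt 0 (x - r) with h | h
    · rw [max_eq_right h]; linarith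
    · rw [max_eq_left h.le]; linarith
  have djhelp : ∀ a b c d : ℝ, b < c → Disjoint (Set.Icc a b) (Set.Icc c d) := by
    intro a b c d h
    refine Set.disjoint_left.2 ?_
    rintro y ⟨_, hyb⟩ ⟨hyc, _⟩
    linarith
  have hAB : Disjoint (Set.Icc (max 0 (x-r)) (min 1 (x+r))) (Set.Icc 0 (x-1+r)) :=
    (djhelp 0 (x-1+r) (max 0 (x-r)) (min 1 (x+r)) d1).symm
  have hAC : Disjoint (Set.Icc (max 0 (x-r)) (min 1 (x+r))) (Set.Icc (x+1-r) 1) :=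
    djhelp _ _ _ _ (lt_of_le_of_lt (min_le_right _ _) (by linarith))
  have hBC : Disjoint (Set.Icc (0:ℝ) (x-1+r)) (Set.Icc (x+1-r) 1) :=
    djhelp _ _ _ _ (by linarith)
  rw [measure_union (hAB.union_right hAC) (measurableSet_Icc.union measurableSet_Icc),
    measure_union hBC measurableSet_Icc]
  simp only [Real.volume_Icc]
  rcases le_or_gt (x + r) 1 with h1 | h1 <;> rcases le_or_gt 0 (x - r) with h2 | h2
  · rw [min_eq_right h1, max_eq_right h2]
    rw [ENNReal.ofReal_eq_zero.2 (by linarith : x - 1 + r - 0 ≤ 0),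
      ENNReal.ofReal_eq_zero.2 (by linarith : 1 - (x + 1 - r) ≤ 0)]
    rw [add_zero, add_zero]
    congr 1; ring
  · rw [min_eq_right h1, max_eq_left h2.le]
    rw [ENNReal.ofReal_eq_zero.2 (by linarith : x - 1 + r - 0 ≤ 0), zero_add]
    rw [← ENNReal.ofReal_add (by linarith) (by linarith)]
    congr 1; ring
  · rw [min_eq_left h1.le, max_eq_right h2]
    rw [ENNReal.ofReal_eq_zero.2 (by linarith : 1 - (x + 1 - r) ≤ 0), add_zero]
    rw [← ENNReal.ofReal_add (by linarith) (by linarith)]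
    congr 1; ring
  · exfalso; linarith

variable {n : ℕ}

def gbmPi (n : ℕ) : Measure (Fin n → ℝ) := Measure.pi fun _ => μ0

def FL (L : List ((Fin n × Fin n) × ℝ)) (X : Fin n → ℝ) : ℝ≥0∞ :=
  (L.map fun p => eK p.2 (X p.1.1) (X p.1.2)).prod

def Fs (s : Finset (Fin n)) (X : Fin n → ℝ) : ℝ≥0∞ := ∏ u ∈ s, iK (X u)

lemma measurable_edge (r : ℝ) (a b : Fin n) :
    Measurable (fun X : Fin n → ℝ => eK r (X a) (X b)) := by
  have h : Measurable fun X : Fin n → ℝ => (X a, X b) :=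
    (measurable_pi_apply a).prodMk (measurable_pi_apply b)
  exact (measurable_eK r).comp h

lemma measurable_FL (L : List ((Fin n × Fin n) × ℝ)) : Measurable (FL L) := by
  induction L with
  | nil =>
    have : FL ([] : List ((Fin n × Fin n) × ℝ)) = fun _ => 1 := by funext X; simp [FL]
    rw [this]; exact measurable_const
  | cons p L ih =>
    have : FL (p :: L) = fun X => eK p.2 (X p.1.1) (X p.1.2) * FL L X := by
      funext X; simp [FL]
    rw [this]
    exact (measurable_edge p.2 p.1.1 p.1.2).mul ih

lemma measurable_Fs (s : Finset (Fin n)) : Measurable (Fs s) :=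
  Finset.measurable_prod s fun u _ => measurable_iK.comp (measurable_pi_apply u)

lemma FL_update {L : List ((Fin n × Fin n) × ℝ)} {v : Fin n}
    (hv : ∀ p ∈ L, p.1.1 ≠ v ∧ p.1.2 ≠ v) (X : Fin n → ℝ) (y : ℝ) :
    FL L (Function.update X v y) = FL L X := by
  induction L with
  | nil => rfl
  | cons p L ih =>
    have h1 := hv p List.mem_cons_self
    simp only [FL, List.map_cons, List.prod_cons]
    rw [Function.update_of_ne h1.1, Function.update_of_ne h1.2]
    have := ih (fun q hq => hv q (List.mem_cons_of_mem p hq))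
    simp only [FL] at this
    rw [this]

lemma Fs_update {s : Finset (Fin n)} {v : Fin n} (hv : v ∉ s) (X : Fin n → ℝ) (y : ℝ) :
    Fs s (Function.update X v y) = Fs s X := by
  refine Finset.prod_congr rfl fun u hu => ?_
  rw [Function.update_of_ne (ne_of_mem_of_not_mem hu hv)]

lemma Fs_insert (a : Fin n) (s : Finset (Fin n)) (X : Fin n → ℝ) :
    iK (X a) * Fs s X = Fs (insert a s) X := by
  classical
  unfold Fs
  by_cases ha : a ∈ s
  · rw [Finset.insert_eq_self.2 ha, ← Finset.mul_prod_erase s (fun u => iK (X u)) ha,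
      ← mul_assoc, iK_mul_iK]
  · rw [Finset.prod_insert ha]

/-- Integrate out one leaf coordinate. -/
lemma STEP {a v : Fin n} {r : ℝ} {G : (Fin n → ℝ) → ℝ≥0∞}
    (hG : Measurable G) (hGv : ∀ X y, G (Function.update X v y) = G X)
    (hav : a ≠ v) (hr0 : 0 ≤ r) (hr : r ≤ 1/4) :
    ∫⁻ X, eK r (X a) (X v) * G X ∂gbmPi n
      = ENNReal.ofReal (2*r) * ∫⁻ X, iK (X a) * G X ∂gbmPi n := by
  classical
  have hf : Measurable fun X : Fin n → ℝ => eK r (X a) (X v) * G X :=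
    (measurable_edge r a v).mul hG
  have hg : Measurable fun X : Fin n → ℝ =>
      ENNReal.ofReal (2*r) * (iK (X a) * G X) :=
    measurable_const.mul ((measurable_iK.comp (measurable_pi_apply a)).mul hG)
  have hm : Measurable fun X : Fin n → ℝ => iK (X a) * G X := by
    exact (measurable_iK.comp (measurable_pi_apply a)).mul hG
  rw [← lintegral_const_mul _ hm]
  refine lintegral_eq_of_lmarginal_eq {v} hf hg ?_
  funext x
  rw [lmarginal_singleton, lmarginal_singleton]
  have h1 : ∀ y : ℝ, (Function.update x v y) a = x a :=
    fun y => Function.update_of_ne hav _ _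
  simp only [h1, Function.update_self, hGv]
  have hm2 : Measurable fun y : ℝ => eK r (x a) y := by
    exact (measurable_eK r).comp (measurable_const.prodMk measurable_id)
  rw [lintegral_mul_const _ hm2, key1 hr0 hr, lintegral_const]
  simp [mul_assoc]

inductive Pr : List ((Fin n × Fin n) × ℝ) → Prop
  | nil : Pr []
  | cons {a v : Fin n} {r : ℝ} {L : List ((Fin n × Fin n) × ℝ)} :
      a ≠ v → (∀ p ∈ L, p.1.1 ≠ v ∧ p.1.2 ≠ v) → 0 ≤ r → r ≤ 1/4 → Pr L →
      Pr (((a,v),r) :: L)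

lemma BOXINT (s : Finset (Fin n)) : ∫⁻ X, Fs s X ∂gbmPi n = 1 := by
  classical
  have h1 : ∀ X : Fin n → ℝ, Fs s X =
      Set.indicator (Set.pi Set.univ fun i => if i ∈ s then Set.Icc (0:ℝ) 1 else Set.univ)
        (fun _ => 1) X := by
    intro X
    rw [Fs]
    simp only [iK]
    rw [Finset.prod_boole, Set.indicator_apply]
    congr 1
    simp only [Set.mem_pi, Set.mem_univ, forall_true_left, eq_iff_iff]
    constructor
    · intro h i
      by_cases hi : i ∈ s <;> simp [hi, h]
    · intro h u hu
      have := h u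
      rwa [if_pos hu] at this
  simp_rw [h1]
  rw [lintegral_indicator (MeasurableSet.univ_pi fun i => by
    split <;> [exact measurableSet_Icc; exact MeasurableSet.univ])]
  simp only [lintegral_one, Measure.restrict_apply MeasurableSet.univ, Set.univ_inter]
  rw [gbmPi, Measure.pi_pi]
  refine Finset.prod_eq_one fun i _ => ?_
  split
  · rw [μ0, Measure.restrict_apply measurableSet_Icc, Set.inter_self, Real.volume_Icc]
    norm_num
  · exact measure_univ

lemma TREE {L : List ((Fin n × Fin n) × ℝ)} (hL : Pr L) :
    ∀ s : Finset (Fin n),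
      ∫⁻ X, FL L X * Fs s X ∂gbmPi n = (L.map fun p => ENNReal.ofReal (2*p.2)).prod := by
  classical
  induction hL with
  | nil =>
    intro s
    simp only [FL, List.map_nil, List.prod_nil, one_mul]
    exact BOXINT s
  | @cons a v r L hav hv hr0 hr hPr ih =>
    intro s
    -- absorb v from s if present
    obtain ⟨s', hvs', hFs⟩ : ∃ s' : Finset (Fin n), v ∉ s' ∧
        ∀ X : Fin n → ℝ, eK r (X a) (X v) * Fs s X = eK r (X a) (X v) * Fs s' X := by
      by_cases hvs : v ∈ s
      · refine ⟨s.erase v, Finset.notMem_erase _ _, fun X => ?_⟩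
        rw [Fs, ← Finset.mul_prod_erase s _ hvs, ← mul_assoc,
          mul_comm (eK r (X a) (X v)), iK_mul_eK]
        rfl
      · exact ⟨s, hvs, fun _ => rfl⟩
    have hstep : ∫⁻ X, eK r (X a) (X v) * (FL L X * Fs s' X) ∂gbmPi n
        = ENNReal.ofReal (2*r) * ∫⁻ X, iK (X a) * (FL L X * Fs s' X) ∂gbmPi n :=
      STEP ((measurable_FL L).mul (measurable_Fs s'))
        (fun X y => by rw [FL_update hv, Fs_update hvs']) hav hr0 hr
    calc ∫⁻ X, FL (((a,v),r) :: L) X * Fs s X ∂gbmPi n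
        = ∫⁻ X, eK r (X a) (X v) * (FL L X * Fs s' X) ∂gbmPi n := by
          refine lintegral_congr fun X => ?_
          have expand : FL (((a,v),r) :: L) X = eK r (X a) (X v) * FL L X := by
            simp [FL]
          rw [expand, mul_assoc, mul_comm (FL L X) (Fs s X), ← mul_assoc, hFs X,
            mul_assoc, mul_comm (Fs s' X) (FL L X)]
      _ = ENNReal.ofReal (2*r) * ∫⁻ X, iK (X a) * (FL L X * Fs s' X) ∂gbmPi n := hstep
      _ = ENNReal.ofReal (2*r) * ∫⁻ X, FL L X * Fs (insert a s') X ∂gbmPi n := by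
          congr 1
          refine lintegral_congr fun X => ?_
          rw [← Fs_insert, ← mul_assoc, mul_comm (iK (X a)) (FL L X), mul_assoc]
      _ = (((( (a,v),r)) :: L).map fun p => ENNReal.ofReal (2*p.2)).prod := by
          rw [ih (insert a s')]
          simp


lemma eK_comm (r u v : ℝ) : eK r u v = eK r v u := by
  have : pdist u v = pdist v u := by simp [pdist, abs_sub_comm]
  simp [eK, this, and_left_comm]

lemma eK_le_one (r u v : ℝ) : eK r u v ≤ 1 := by
  unfold eK; split <;> simp

lemma eK_mono {r r' : ℝ} (h : r ≤ r') (u v : ℝ) : eK r u v ≤ eK r' u v := by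
  unfold eK
  split
  · rename_i hc
    rw [if_pos ⟨hc.1, hc.2.1, hc.2.2.trans h⟩]
  · simp

/-- wrapper : lintegral of a prunable product of edge kernels -/
lemma TREE' {L : List ((Fin n × Fin n) × ℝ)} (hL : Pr L) :
    ∫⁻ X, FL L X ∂gbmPi n = (L.map fun p => ENNReal.ofReal (2*p.2)).prod := by
  rw [← TREE hL ∅]
  refine lintegral_congr fun X => ?_
  simp [Fs]

instance : IsProbabilityMeasure (gbmPi n) := by
  rw [gbmPi]; infer_instance

lemma AEbox : ∀ᵐ X ∂gbmPi n, ∀ i, X i ∈ Set.Icc (0:ℝ) 1 := by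
  have hmeas : MeasurableSet (Set.pi Set.univ fun _ : Fin n => Set.Icc (0:ℝ) 1) :=
    MeasurableSet.univ_pi fun _ => measurableSet_Icc
  have h1 : gbmPi n (Set.pi Set.univ fun _ : Fin n => Set.Icc (0:ℝ) 1) = 1 := by
    rw [gbmPi, Measure.pi_pi]
    refine Finset.prod_eq_one fun i _ => ?_
    rw [μ0, Measure.restrict_apply measurableSet_Icc, Set.inter_self, Real.volume_Icc]
    norm_num
  have h2 : gbmPi n (Set.pi Set.univ fun _ : Fin n => Set.Icc (0:ℝ) 1)ᶜ = 0 := by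
    rw [measure_compl hmeas (measure_ne_top _ _), h1]
    simp
  rw [ae_iff]
  refine measure_mono_null ?_ h2
  intro X hX
  simp only [Set.mem_compl_iff, Set.mem_pi, Set.mem_univ, forall_true_left]
  simp only [Set.mem_setOf_eq] at hX
  exact fun h => hX fun i => h i

/-- conversion from Bochner integral to lintegral -/
lemma conv {f : (Fin n → ℝ) → ℝ} {g : (Fin n → ℝ) → ℝ≥0∞}
    (hf : Measurable f) (hf0 : ∀ X, 0 ≤ f X)
    (hfg : ∀ X : Fin n → ℝ, (∀ i, X i ∈ Set.Icc (0:ℝ) 1) → ENNReal.ofReal (f X) = g X) :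
    ∫ X, f X ∂gbmPi n = (∫⁻ X, g X ∂gbmPi n).toReal := by
  rw [integral_eq_lintegral_of_nonneg_ae (Filter.Eventually.of_forall hf0)
    hf.aestronglyMeasurable]
  congr 1
  refine lintegral_congr_ae ?_
  filter_upwards [AEbox] with X hX
  exact hfg X hX

end GBMaux

namespace GBMlayer
open GBMaux

variable {n m : ℕ} {rs rd : ℝ}

/-- the radius of the edge (i,j) -/
def ρ (m : ℕ) (rs rd : ℝ) {n : ℕ} (i j : Fin n) : ℝ :=
  if ((i : ℕ) < m ↔ (j : ℕ) < m) then rs else rd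

lemma rho_nonneg (hrd0 : 0 ≤ rd) (hrdrs : rd ≤ rs) (i j : Fin n) :
    0 ≤ ρ m rs rd i j := by
  unfold ρ; split
  · linarith
  · exact hrd0

lemma rho_le (hrdrs : rd ≤ rs) (i j : Fin n) : ρ m rs rd i j ≤ rs := by
  unfold ρ; split
  · exact le_refl rs
  · exact hrdrs

lemma rho_comm (i j : Fin n) : ρ m rs rd i j = ρ m rs rd j i := by
  unfold ρ
  by_cases h : (i:ℕ) < m <;> by_cases h' : (j:ℕ) < m <;> simp [h, h']

lemma gbmA_eq {i j : Fin n} (hij : i ≠ j) (X : Fin n → ℝ) :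
    gbmA n m rs rd X i j = if pdist (X i) (X j) ≤ ρ m rs rd i j then 1 else 0 := by
  unfold gbmA ρ
  rw [if_neg hij]
  by_cases h : ((i:ℕ) < m ↔ (j:ℕ) < m) <;> simp [h]

lemma gbmA_nonneg (X : Fin n → ℝ) (i j : Fin n) : 0 ≤ gbmA n m rs rd X i j := by
  unfold gbmA
  split_ifs <;> norm_num

lemma gbmA_le_one (X : Fin n → ℝ) (i j : Fin n) : gbmA n m rs rd X i j ≤ 1 := by
  unfold gbmA
  split_ifs <;> norm_num

lemma measurable_gbmA (i j : Fin n) :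
    Measurable fun X : Fin n → ℝ => gbmA n m rs rd X i j := by
  have hp : ∀ r : ℝ, Measurable fun X : Fin n → ℝ =>
      (if pdist (X i) (X j) ≤ r then (1:ℝ) else 0) := by
    intro r
    refine Measurable.ite ?_ measurable_const measurable_const
    have hc : Continuous fun p : ℝ × ℝ => pdist p.1 p.2 := by
      unfold pdist; fun_prop
    have hpair : Measurable fun X : Fin n → ℝ => (X i, X j) :=
      (measurable_pi_apply i).prodMk (measurable_pi_apply j)
    have h : Measurable fun X : Fin n → ℝ => pdist (X i) (X j) :=
      hc.measurable.comp hpair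
    exact measurableSet_le h measurable_const
  by_cases h : i = j
  · simp only [gbmA, h, if_pos rfl]
    exact measurable_const
  · by_cases h2 : ((i:ℕ) < m ↔ (j:ℕ) < m)
    · simp only [gbmA, if_neg h, if_pos h2]
      exact hp rs
    · simp only [gbmA, if_neg h, if_neg h2]
      exact hp rd

lemma oR_gbmA {i j : Fin n} (hij : i ≠ j) {X : Fin n → ℝ}
    (hXi : X i ∈ Set.Icc (0:ℝ) 1) (hXj : X j ∈ Set.Icc (0:ℝ) 1) :
    ENNReal.ofReal (gbmA n m rs rd X i j) = eK (ρ m rs rd i j) (X i) (X j) := by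
  rw [gbmA_eq hij]
  unfold eK
  by_cases h : pdist (X i) (X j) ≤ ρ m rs rd i j
  · simp [h, hXi, hXj]
  · simp [h, hXi, hXj]


def Ek (m : ℕ) (rs rd : ℝ) {n : ℕ} (a b : Fin n) (X : Fin n → ℝ) : ℝ≥0∞ :=
  eK (ρ m rs rd a b) (X a) (X b)

section main
variable (hrd0 : 0 ≤ rd) (hrdrs : rd ≤ rs) (hrs14 : rs ≤ 1/4)
variable {i j k : Fin n}

/-- conversion of the 2-path integrand -/
lemma convT (hij : i ≠ j) (hjk : j ≠ k) :
    ∫ X, gbmA n m rs rd X i j * gbmA n m rs rd X j k ∂gbmPi n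
      = (∫⁻ X, Ek m rs rd i j X * Ek m rs rd j k X ∂gbmPi n).toReal := by
  refine conv ((measurable_gbmA i j).mul (measurable_gbmA j k))
    (fun X => mul_nonneg (gbmA_nonneg X i j) (gbmA_nonneg X j k)) (fun X hX => ?_)
  rw [ENNReal.ofReal_mul (gbmA_nonneg X i j), oR_gbmA hij (hX i) (hX j),
    oR_gbmA hjk (hX j) (hX k)]
  rfl

include hrd0 hrdrs hrs14 in
lemma intT_eq (hij : i ≠ j) (hik : i ≠ k) (hjk : j ≠ k) :
    ∫ X, gbmA n m rs rd X i j * gbmA n m rs rd X j k ∂gbmPi n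
      = (2 * ρ m rs rd i j) * (2 * ρ m rs rd j k) := by
  rw [convT hij hjk]
  have hPr : Pr [((j,i), ρ m rs rd i j), ((j,k), ρ m rs rd j k)] := by
    refine Pr.cons hij.symm ?_ (rho_nonneg hrd0 hrdrs i j) ((rho_le hrdrs i j).trans hrs14)
      (Pr.cons hjk ?_ (rho_nonneg hrd0 hrdrs j k) ((rho_le hrdrs j k).trans hrs14) Pr.nil)
    · intro p hp
      simp only [List.mem_singleton] at hp
      subst hp
      exact ⟨hij.symm, hik.symm⟩
    · intro p hp
      simp at hp
  have hcongr : ∫⁻ X, Ek m rs rd i j X * Ek m rs rd j k X ∂gbmPi n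
      = ∫⁻ X, FL [((j,i), ρ m rs rd i j), ((j,k), ρ m rs rd j k)] X ∂gbmPi n := by
    refine lintegral_congr fun X => ?_
    simp only [FL, List.map_cons, List.map_nil, List.prod_cons, List.prod_nil, mul_one, Ek]
    rw [eK_comm (ρ m rs rd i j) (X j) (X i), rho_comm i j]
  rw [hcongr, TREE' hPr]
  simp only [List.map_cons, List.map_nil, List.prod_cons, List.prod_nil, mul_one]
  rw [ENNReal.toReal_mul, ENNReal.toReal_ofReal (by linarith [rho_nonneg (n := n) (m := m) hrd0 hrdrs i j]),
    ENNReal.toReal_ofReal (by linarith [rho_nonneg (n := n) (m := m) hrd0 hrdrs j k])]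

variable {i' j' k' : Fin n}

lemma convTT (hij : i ≠ j) (hjk : j ≠ k) (hIJ : i' ≠ j') (hJK : j' ≠ k') :
    ∫ X, (gbmA n m rs rd X i j * gbmA n m rs rd X j k) *
        (gbmA n m rs rd X i' j' * gbmA n m rs rd X j' k') ∂gbmPi n
      = (∫⁻ X, Ek m rs rd i j X * Ek m rs rd j k X *
          (Ek m rs rd i' j' X * Ek m rs rd j' k' X) ∂gbmPi n).toReal := by
  refine conv (((measurable_gbmA i j).mul (measurable_gbmA j k)).mul
      ((measurable_gbmA i' j').mul (measurable_gbmA j' k')))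
    (fun X => mul_nonneg (mul_nonneg (gbmA_nonneg X i j) (gbmA_nonneg X j k))
      (mul_nonneg (gbmA_nonneg X i' j') (gbmA_nonneg X j' k'))) (fun X hX => ?_)
  rw [ENNReal.ofReal_mul (mul_nonneg (gbmA_nonneg X i j) (gbmA_nonneg X j k)),
    ENNReal.ofReal_mul (gbmA_nonneg X i j), ENNReal.ofReal_mul (gbmA_nonneg X i' j'),
    oR_gbmA hij (hX i) (hX j), oR_gbmA hjk (hX j) (hX k),
    oR_gbmA hIJ (hX i') (hX j'), oR_gbmA hJK (hX j') (hX k')]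
  rfl

include hrd0 hrdrs hrs14 in
/-- generic evaluation of the 4-edge lintegral from a prunable list equal to it -/
lemma lint4_eq {L : List ((Fin n × Fin n) × ℝ)} (hL : Pr L)
    (hprod : ∀ X : Fin n → ℝ, Ek m rs rd i j X * Ek m rs rd j k X *
        (Ek m rs rd i' j' X * Ek m rs rd j' k' X) = FL L X)
    (hval : (L.map fun p => ENNReal.ofReal (2*p.2)).prod
      = ENNReal.ofReal (2 * ρ m rs rd i j) * ENNReal.ofReal (2 * ρ m rs rd j k) *
        (ENNReal.ofReal (2 * ρ m rs rd i' j') * ENNReal.ofReal (2 * ρ m rs rd j' k'))) :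
    ∫⁻ X, Ek m rs rd i j X * Ek m rs rd j k X *
        (Ek m rs rd i' j' X * Ek m rs rd j' k' X) ∂gbmPi n
      = ENNReal.ofReal (2 * ρ m rs rd i j) * ENNReal.ofReal (2 * ρ m rs rd j k) *
        (ENNReal.ofReal (2 * ρ m rs rd i' j') * ENNReal.ofReal (2 * ρ m rs rd j' k')) := by
  rw [lintegral_congr hprod, TREE' hL, hval]

include hrd0 hrdrs hrs14 in
lemma covTT_eq (hij : i ≠ j) (hik : i ≠ k) (hjk : j ≠ k)
    (hIJ : i' ≠ j') (hIK : i' ≠ k') (hJK : j' ≠ k')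
    (hshare : (j' ≠ i ∧ j' ≠ j ∧ j' ≠ k) ∧ (k' ≠ i ∧ k' ≠ j ∧ k' ≠ k) ∨
              (i' ≠ i ∧ i' ≠ j ∧ i' ≠ k) ∧ (k' ≠ i ∧ k' ≠ j ∧ k' ≠ k) ∨
              (i' ≠ i ∧ i' ≠ j ∧ i' ≠ k) ∧ (j' ≠ i ∧ j' ≠ j ∧ j' ≠ k)) :
    ∫ X, (gbmA n m rs rd X i j * gbmA n m rs rd X j k) *
        (gbmA n m rs rd X i' j' * gbmA n m rs rd X j' k') ∂gbmPi n
      = ((2 * ρ m rs rd i j) * (2 * ρ m rs rd j k)) *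
        ((2 * ρ m rs rd i' j') * (2 * ρ m rs rd j' k')) := by
  have hr0 : ∀ a b : Fin n, 0 ≤ ρ m rs rd a b := rho_nonneg hrd0 hrdrs
  have hr14 : ∀ a b : Fin n, ρ m rs rd a b ≤ 1/4 := fun a b => (rho_le hrdrs a b).trans hrs14
  rw [convTT hij hjk hIJ hJK]
  have htail : Pr [((j,i), ρ m rs rd i j), ((j,k), ρ m rs rd j k)] := by
    refine Pr.cons hij.symm ?_ (hr0 i j) (hr14 i j)
      (Pr.cons hjk ?_ (hr0 j k) (hr14 j k) Pr.nil)
    · intro p hp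
      simp only [List.mem_singleton] at hp
      subst hp
      exact ⟨hij.symm, hik.symm⟩
    · intro p hp
      simp at hp
  have key : ∫⁻ X, Ek m rs rd i j X * Ek m rs rd j k X *
        (Ek m rs rd i' j' X * Ek m rs rd j' k' X) ∂gbmPi n
      = ENNReal.ofReal (2 * ρ m rs rd i j) * ENNReal.ofReal (2 * ρ m rs rd j k) *
        (ENNReal.ofReal (2 * ρ m rs rd i' j') * ENNReal.ofReal (2 * ρ m rs rd j' k')) := by
    rcases hshare with ⟨hJ, hK⟩ | ⟨hI, hK⟩ | ⟨hI, hJ⟩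
    · -- j', k' fresh; prune k' then j'
      refine lint4_eq hrd0 hrdrs hrs14
        (L := [((j',k'), ρ m rs rd j' k'), ((i',j'), ρ m rs rd i' j'),
               ((j,i), ρ m rs rd i j), ((j,k), ρ m rs rd j k)]) ?_ ?_ ?_
      · refine Pr.cons hJK ?_ (hr0 j' k') (hr14 j' k')
          (Pr.cons hIJ ?_ (hr0 i' j') (hr14 i' j') htail)
        · intro p hp
          simp only [List.mem_cons, List.mem_singleton, List.not_mem_nil, or_false] at hp
          rcases hp with rfl | rfl | rfl
          · exact ⟨hIK, hJK⟩
          · exact ⟨hK.2.1.symm, hK.1.symm⟩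
          · exact ⟨hK.2.1.symm, hK.2.2.symm⟩
        · intro p hp
          simp only [List.mem_cons, List.mem_singleton, List.not_mem_nil, or_false] at hp
          rcases hp with rfl | rfl
          · exact ⟨hJ.2.1.symm, hJ.1.symm⟩
          · exact ⟨hJ.2.1.symm, hJ.2.2.symm⟩
      · intro X
        simp only [FL, List.map_cons, List.map_nil, List.prod_cons, List.prod_nil, mul_one, Ek]
        rw [eK_comm (ρ m rs rd i j) (X j) (X i), rho_comm i j]
        ring
      · simp only [List.map_cons, List.map_nil, List.prod_cons, List.prod_nil, mul_one]
        rw [rho_comm i j]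
        ring
    · -- i', k' fresh; prune i' then k'
      refine lint4_eq hrd0 hrdrs hrs14
        (L := [((j',i'), ρ m rs rd i' j'), ((j',k'), ρ m rs rd j' k'),
               ((j,i), ρ m rs rd i j), ((j,k), ρ m rs rd j k)]) ?_ ?_ ?_
      · refine Pr.cons hIJ.symm ?_ (hr0 i' j') (hr14 i' j')
          (Pr.cons hJK ?_ (hr0 j' k') (hr14 j' k') htail)
        · intro p hp
          simp only [List.mem_cons, List.mem_singleton, List.not_mem_nil, or_false] at hp
          rcases hp with rfl | rfl | rfl
          · exact ⟨hIJ.symm, hIK.symm⟩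
          · exact ⟨hI.2.1.symm, hI.1.symm⟩
          · exact ⟨hI.2.1.symm, hI.2.2.symm⟩
        · intro p hp
          simp only [List.mem_cons, List.mem_singleton, List.not_mem_nil, or_false] at hp
          rcases hp with rfl | rfl
          · exact ⟨hK.2.1.symm, hK.1.symm⟩
          · exact ⟨hK.2.1.symm, hK.2.2.symm⟩
      · intro X
        simp only [FL, List.map_cons, List.map_nil, List.prod_cons, List.prod_nil, mul_one, Ek]
        rw [eK_comm (ρ m rs rd i j) (X j) (X i), rho_comm i j,
          eK_comm (ρ m rs rd i' j') (X j') (X i'), rho_comm i' j']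
        ring
      · simp only [List.map_cons, List.map_nil, List.prod_cons, List.prod_nil, mul_one]
        rw [rho_comm i j, rho_comm i' j']
        ring
    · -- i', j' fresh; prune i' then j'
      refine lint4_eq hrd0 hrdrs hrs14
        (L := [((j',i'), ρ m rs rd i' j'), ((k',j'), ρ m rs rd j' k'),
               ((j,i), ρ m rs rd i j), ((j,k), ρ m rs rd j k)]) ?_ ?_ ?_
      · refine Pr.cons hIJ.symm ?_ (hr0 i' j') (hr14 i' j')
          (Pr.cons hJK.symm ?_ (hr0 j' k') (hr14 j' k') htail)
        · intro p hp
          simp only [List.mem_cons, List.mem_singleton, List.not_mem_nil, or_false] at hp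
          rcases hp with rfl | rfl | rfl
          · exact ⟨hIK.symm, hIJ.symm⟩
          · exact ⟨hI.2.1.symm, hI.1.symm⟩
          · exact ⟨hI.2.1.symm, hI.2.2.symm⟩
        · intro p hp
          simp only [List.mem_cons, List.mem_singleton, List.not_mem_nil, or_false] at hp
          rcases hp with rfl | rfl
          · exact ⟨hJ.2.1.symm, hJ.1.symm⟩
          · exact ⟨hJ.2.1.symm, hJ.2.2.symm⟩
      · intro X
        simp only [FL, List.map_cons, List.map_nil, List.prod_cons, List.prod_nil, mul_one, Ek]
        rw [eK_comm (ρ m rs rd i j) (X j) (X i), rho_comm i j,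
          eK_comm (ρ m rs rd i' j') (X j') (X i'), rho_comm i' j',
          eK_comm (ρ m rs rd j' k') (X k') (X j'), rho_comm j' k']
        ring
      · simp only [List.map_cons, List.map_nil, List.prod_cons, List.prod_nil, mul_one]
        rw [rho_comm i j, rho_comm i' j', rho_comm j' k']
        ring
  rw [key]
  rw [ENNReal.toReal_mul, ENNReal.toReal_mul, ENNReal.toReal_mul,
    ENNReal.toReal_ofReal (by linarith [hr0 i j]),
    ENNReal.toReal_ofReal (by linarith [hr0 j k]),
    ENNReal.toReal_ofReal (by linarith [hr0 i' j']),
    ENNReal.toReal_ofReal (by linarith [hr0 j' k'])]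

include hrd0 hrdrs hrs14 in
lemma intTT_le_aux {L : List ((Fin n × Fin n) × ℝ)} (hL : Pr L)
    (hij : i ≠ j) (hjk : j ≠ k) (hIJ : i' ≠ j') (hJK : j' ≠ k')
    (hle : ∀ X : Fin n → ℝ, Ek m rs rd i j X * Ek m rs rd j k X *
        (Ek m rs rd i' j' X * Ek m rs rd j' k' X) ≤ FL L X)
    {B : ℝ} (hB : 0 ≤ B)
    (hval : (L.map fun p => ENNReal.ofReal (2*p.2)).prod = ENNReal.ofReal B) :
    ∫ X, (gbmA n m rs rd X i j * gbmA n m rs rd X j k) *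
        (gbmA n m rs rd X i' j' * gbmA n m rs rd X j' k') ∂gbmPi n ≤ B := by
  rw [convTT hij hjk hIJ hJK]
  have hlin : ∫⁻ X, Ek m rs rd i j X * Ek m rs rd j k X *
      (Ek m rs rd i' j' X * Ek m rs rd j' k' X) ∂gbmPi n ≤ ENNReal.ofReal B := by
    rw [← hval, ← TREE' hL]
    exact lintegral_mono hle
  exact (ENNReal.toReal_mono ENNReal.ofReal_ne_top hlin).trans_eq (ENNReal.toReal_ofReal hB)

include hrd0 hrdrs hrs14 in
lemma intTT_le3 (hij : i ≠ j) (hik : i ≠ k) (hjk : j ≠ k) (hIJ : i' ≠ j') (hJK : j' ≠ k') :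
    ∫ X, (gbmA n m rs rd X i j * gbmA n m rs rd X j k) *
        (gbmA n m rs rd X i' j' * gbmA n m rs rd X j' k') ∂gbmPi n ≤ 4 * rs^2 := by
  have hrs0 : 0 ≤ rs := hrd0.trans hrdrs
  have hr14 : ∀ a b : Fin n, ρ m rs rd a b ≤ rs := rho_le hrdrs
  refine intTT_le_aux hrd0 hrdrs hrs14
    (L := [((j,i), rs), ((j,k), rs)]) ?_ hij hjk hIJ hJK (fun X => ?_)
    (by positivity) ?_
  · refine Pr.cons hij.symm ?_ hrs0 hrs14 (Pr.cons hjk ?_ hrs0 hrs14 Pr.nil)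
    · intro p hp
      simp only [List.mem_singleton] at hp
      subst hp
      exact ⟨hij.symm, hik.symm⟩
    · intro p hp
      simp at hp
  · have h1 : Ek m rs rd i j X ≤ eK rs (X j) (X i) := by
      rw [eK_comm]; exact eK_mono (hr14 i j) _ _
    have h2 : Ek m rs rd j k X ≤ eK rs (X j) (X k) := eK_mono (hr14 j k) _ _
    have h3 : Ek m rs rd i' j' X * Ek m rs rd j' k' X ≤ 1 :=
      mul_le_one' (eK_le_one _ _ _) (eK_le_one _ _ _)
    calc Ek m rs rd i j X * Ek m rs rd j k X *
          (Ek m rs rd i' j' X * Ek m rs rd j' k' X)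
        ≤ eK rs (X j) (X i) * eK rs (X j) (X k) * 1 :=
          mul_le_mul' (mul_le_mul' h1 h2) h3
      _ = FL [((j,i), rs), ((j,k), rs)] X := by
          simp [FL]
  · simp only [List.map_cons, List.map_nil, List.prod_cons, List.prod_nil, mul_one]
    rw [← ENNReal.ofReal_mul (by linarith)]
    congr 1
    ring

include hrd0 hrdrs hrs14 in
lemma intTT_le2 (hij : i ≠ j) (hik : i ≠ k) (hjk : j ≠ k)
    (hIJ : i' ≠ j') (hIK : i' ≠ k') (hJK : j' ≠ k')
    (hfresh : (i' ≠ i ∧ i' ≠ j ∧ i' ≠ k) ∨ (j' ≠ i ∧ j' ≠ j ∧ j' ≠ k) ∨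
              (k' ≠ i ∧ k' ≠ j ∧ k' ≠ k)) :
    ∫ X, (gbmA n m rs rd X i j * gbmA n m rs rd X j k) *
        (gbmA n m rs rd X i' j' * gbmA n m rs rd X j' k') ∂gbmPi n ≤ 8 * rs^3 := by
  have hrs0 : 0 ≤ rs := hrd0.trans hrdrs
  have hr14 : ∀ a b : Fin n, ρ m rs rd a b ≤ rs := rho_le hrdrs
  have h1 : ∀ X : Fin n → ℝ, Ek m rs rd i j X ≤ eK rs (X j) (X i) := fun X => by
    rw [eK_comm]; exact eK_mono (hr14 i j) _ _
  have h2 : ∀ X : Fin n → ℝ, Ek m rs rd j k X ≤ eK rs (X j) (X k) := fun X =>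
    eK_mono (hr14 j k) _ _
  have hPrT : Pr [((j,i), rs), ((j,k), rs)] := by
    refine Pr.cons hij.symm ?_ hrs0 hrs14 (Pr.cons hjk ?_ hrs0 hrs14 Pr.nil)
    · intro p hp
      simp only [List.mem_singleton] at hp
      subst hp
      exact ⟨hij.symm, hik.symm⟩
    · intro p hp
      simp at hp
  have hval3 : ∀ a b : Fin n,
      (([((a,b), rs), ((j,i), rs), ((j,k), rs)]).map
        fun p => ENNReal.ofReal (2*p.2)).prod = ENNReal.ofReal (8 * rs^3) := by
    intro a b
    simp only [List.map_cons, List.map_nil, List.prod_cons, List.prod_nil, mul_one]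
    rw [← ENNReal.ofReal_mul (by linarith), ← ENNReal.ofReal_mul (by positivity)]
    congr 1
    ring
  rcases hfresh with hI | hJ | hK
  · refine intTT_le_aux hrd0 hrdrs hrs14
      (L := [((j',i'), rs), ((j,i), rs), ((j,k), rs)]) ?_ hij hjk hIJ hJK (fun X => ?_)
      (by positivity) (hval3 j' i')
    · refine Pr.cons hIJ.symm ?_ hrs0 hrs14 hPrT
      intro p hp
      simp only [List.mem_cons, List.mem_singleton, List.not_mem_nil, or_false] at hp
      rcases hp with rfl | rfl
      · exact ⟨hI.2.1.symm, hI.1.symm⟩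
      · exact ⟨hI.2.1.symm, hI.2.2.symm⟩
    · have hc : Ek m rs rd i' j' X ≤ eK rs (X j') (X i') := by
        rw [eK_comm]; exact eK_mono (hr14 i' j') _ _
      calc Ek m rs rd i j X * Ek m rs rd j k X *
            (Ek m rs rd i' j' X * Ek m rs rd j' k' X)
          ≤ eK rs (X j) (X i) * eK rs (X j) (X k) * (eK rs (X j') (X i') * 1) :=
            mul_le_mul' (mul_le_mul' (h1 X) (h2 X)) (mul_le_mul' hc (eK_le_one _ _ _))
        _ = FL [((j',i'), rs), ((j,i), rs), ((j,k), rs)] X := by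
            simp only [FL, List.map_cons, List.map_nil, List.prod_cons, List.prod_nil, mul_one]
            ring
  · refine intTT_le_aux hrd0 hrdrs hrs14
      (L := [((i',j'), rs), ((j,i), rs), ((j,k), rs)]) ?_ hij hjk hIJ hJK (fun X => ?_)
      (by positivity) (hval3 i' j')
    · refine Pr.cons hIJ ?_ hrs0 hrs14 hPrT
      intro p hp
      simp only [List.mem_cons, List.mem_singleton, List.not_mem_nil, or_false] at hp
      rcases hp with rfl | rfl
      · exact ⟨hJ.2.1.symm, hJ.1.symm⟩
      · exact ⟨hJ.2.1.symm, hJ.2.2.symm⟩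
    · have hc : Ek m rs rd i' j' X ≤ eK rs (X i') (X j') := eK_mono (hr14 i' j') _ _
      calc Ek m rs rd i j X * Ek m rs rd j k X *
            (Ek m rs rd i' j' X * Ek m rs rd j' k' X)
          ≤ eK rs (X j) (X i) * eK rs (X j) (X k) * (eK rs (X i') (X j') * 1) :=
            mul_le_mul' (mul_le_mul' (h1 X) (h2 X)) (mul_le_mul' hc (eK_le_one _ _ _))
        _ = FL [((i',j'), rs), ((j,i), rs), ((j,k), rs)] X := by
            simp only [FL, List.map_cons, List.map_nil, List.prod_cons, List.prod_nil, mul_one]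
            ring
  · refine intTT_le_aux hrd0 hrdrs hrs14
      (L := [((j',k'), rs), ((j,i), rs), ((j,k), rs)]) ?_ hij hjk hIJ hJK (fun X => ?_)
      (by positivity) (hval3 j' k')
    · refine Pr.cons hJK ?_ hrs0 hrs14 hPrT
      intro p hp
      simp only [List.mem_cons, List.mem_singleton, List.not_mem_nil, or_false] at hp
      rcases hp with rfl | rfl
      · exact ⟨hK.2.1.symm, hK.1.symm⟩
      · exact ⟨hK.2.1.symm, hK.2.2.symm⟩
    · have hd : Ek m rs rd j' k' X ≤ eK rs (X j') (X k') := eK_mono (hr14 j' k') _ _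
      calc Ek m rs rd i j X * Ek m rs rd j k X *
            (Ek m rs rd i' j' X * Ek m rs rd j' k' X)
          ≤ eK rs (X j) (X i) * eK rs (X j) (X k) * (1 * eK rs (X j') (X k')) :=
            mul_le_mul' (mul_le_mul' (h1 X) (h2 X)) (mul_le_mul' (eK_le_one _ _ _) hd)
        _ = FL [((j',k'), rs), ((j,i), rs), ((j,k), rs)] X := by
            simp only [FL, List.map_cons, List.map_nil, List.prod_cons, List.prod_nil, mul_one]
            ring

include hrd0 hrdrs hrs14 in
lemma intT_bounds (hij : i ≠ j) (hik : i ≠ k) (hjk : j ≠ k) :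
    0 ≤ ∫ X, gbmA n m rs rd X i j * gbmA n m rs rd X j k ∂gbmPi n ∧
    ∫ X, gbmA n m rs rd X i j * gbmA n m rs rd X j k ∂gbmPi n ≤ 4 * rs^2 := by
  rw [intT_eq hrd0 hrdrs hrs14 hij hik hjk]
  have h1 := rho_nonneg (n := n) (m := m) hrd0 hrdrs i j
  have h2 := rho_nonneg (n := n) (m := m) hrd0 hrdrs j k
  have h3 := rho_le (n := n) (m := m) hrdrs i j
  have h4 := rho_le (n := n) (m := m) hrdrs j k
  constructor
  · positivity
  · nlinarith

lemma integrable_of_bdd {f : (Fin n → ℝ) → ℝ} (hf : Measurable f) {C : ℝ}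
    (h : ∀ X, |f X| ≤ C) : Integrable f (gbmPi n) := by
  refine Integrable.mono' (integrable_const C) hf.aestronglyMeasurable ?_
  exact Filter.Eventually.of_forall fun X => by simpa using h X

end main

lemma cov_expand {α : Type*} [MeasurableSpace α] {π : Measure α} [IsProbabilityMeasure π]
    {f h : α → ℝ} (hf : Integrable f π) (hh : Integrable h π)
    (hfh : Integrable (fun x => f x * h x) π) :
    ∫ x, (f x - ∫ y, f y ∂π) * (h x - ∫ y, h y ∂π) ∂π
      = (∫ x, f x * h x ∂π) - (∫ x, f x ∂π) * (∫ x, h x ∂π) := by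
  set cf := ∫ y, f y ∂π with hcf
  set ch := ∫ y, h y ∂π with hch
  have hint : ∀ x, (f x - cf) * (h x - ch)
      = (f x * h x - cf * h x) - (ch * f x - cf * ch) := by
    intro x; ring
  simp_rw [hint]
  have i1 : Integrable (fun x => cf * h x) π := hh.const_mul cf
  have i2 : Integrable (fun x => ch * f x) π := hf.const_mul ch
  have i3 : Integrable (fun _ : α => cf * ch) π := integrable_const _
  have j1 : Integrable (fun x => f x * h x - cf * h x) π := hfh.sub i1
  have j2 : Integrable (fun x => ch * f x - cf * ch) π := i2.sub i3
  rw [integral_sub j1 j2, integral_sub hfh i1, integral_sub i2 i3,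
    MeasureTheory.integral_const_mul, MeasureTheory.integral_const_mul, integral_const]
  simp only [measure_univ, probReal_univ, ENNReal.toReal_one, smul_eq_mul, one_mul, mul_one]
  ring

lemma sum_factor (f1 f2 f3 : Fin n → ℝ) :
    ∑ i', ∑ j', ∑ k', f1 i' * f2 j' * f3 k'
      = (∑ x, f1 x) * (∑ x, f2 x) * (∑ x, f3 x) := by
  have h1 : ∀ i' j' : Fin n, ∑ k', f1 i' * f2 j' * f3 k'
      = f1 i' * f2 j' * ∑ k', f3 k' := fun i' j' => (Finset.mul_sum _ _ _).symm
  simp_rw [h1]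
  have h2 : ∀ i' : Fin n, ∑ j', f1 i' * f2 j' * (∑ k', f3 k')
      = (f1 i' * ∑ j', f2 j') * ∑ k', f3 k' := by
    intro i'
    rw [← Finset.sum_mul, ← Finset.mul_sum]
  simp_rw [h2]
  rw [← Finset.sum_mul, ← Finset.sum_mul]

lemma cnt_le_three (i j k : Fin n) :
    (∑ x : Fin n, (if x = i ∨ x = j ∨ x = k then (1:ℝ) else 0)) ≤ 3 := by
  rw [Finset.sum_boole]
  have hsub : Finset.univ.filter (fun x : Fin n => x = i ∨ x = j ∨ x = k)
      ⊆ insert i (insert j {k}) := by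
    intro x hx
    simp only [Finset.mem_filter] at hx
    simp only [Finset.mem_insert, Finset.mem_singleton]
    exact hx.2
  have := Finset.card_le_card hsub
  have h2 : (insert i (insert j ({k} : Finset (Fin n)))).card ≤ 3 := by
    refine (Finset.card_insert_le _ _).trans ?_
    have := (Finset.card_insert_le j ({k} : Finset (Fin n)))
    simp only [Finset.card_singleton] at this
    omega
  have h3 : (Finset.univ.filter (fun x : Fin n => x = i ∨ x = j ∨ x = k)).card ≤ 3 :=
    le_trans this h2
  exact_mod_cast Nat.cast_le.mpr h3

lemma cnt_nonneg (i j k : Fin n) :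
    0 ≤ (∑ x : Fin n, (if x = i ∨ x = j ∨ x = k then (1:ℝ) else 0)) := by
  refine Finset.sum_nonneg fun x _ => ?_
  split <;> norm_num

end GBMlayer



open GBMaux GBMlayer

set_option maxHeartbeats 1000000

/-- Second-moment bound for the centered number of ordered 2-paths: there is an
absolute constant `C > 0` (independent of `n`, `m`/`τ`, `r_s`, `r_d`) such that
`E[P_n²] ≤ C (n⁴ r_s³ + n³ r_s²)` for every geometric block model with
`0 ≤ r_d ≤ r_s ≤ 1/4`. -/
theorem centered_two_paths_variance_bound :
    ∃ C : ℝ, 0 < C ∧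
      ∀ (n m : ℕ), m ≤ n → ∀ (rs rd : ℝ), 0 ≤ rd → rd ≤ rs → rs ≤ 1 / 4 →
        (∫ X, (∑ i : Fin n, ∑ j : Fin n, ∑ k : Fin n,
            if i ≠ j ∧ i ≠ k ∧ j ≠ k then
              gbmA n m rs rd X i j * gbmA n m rs rd X j k
                - ∫ Y, gbmA n m rs rd Y i j * gbmA n m rs rd Y j k ∂gbmMeasure n
            else 0) ^ 2 ∂gbmMeasure n)
          ≤ C * ((n : ℝ) ^ 4 * rs ^ 3 + (n : ℝ) ^ 3 * rs ^ 2) := by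
  classical
  refine ⟨324, by norm_num, ?_⟩
  intro n m _hmn rs rd hrd0 hrdrs hrs14
  have hrs0 : 0 ≤ rs := hrd0.trans hrdrs
  have hπ : gbmMeasure n = GBMaux.gbmPi n := rfl
  rw [hπ]
  set g : Fin n → Fin n → Fin n → (Fin n → ℝ) → ℝ := fun i j k X =>
    if i ≠ j ∧ i ≠ k ∧ j ≠ k then
      gbmA n m rs rd X i j * gbmA n m rs rd X j k
        - ∫ Y, gbmA n m rs rd Y i j * gbmA n m rs rd Y j k ∂GBMaux.gbmPi n
    else 0 with hg
  have hgoal : (∫ X, (∑ i : Fin n, ∑ j : Fin n, ∑ k : Fin n,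
      if i ≠ j ∧ i ≠ k ∧ j ≠ k then
        gbmA n m rs rd X i j * gbmA n m rs rd X j k
          - ∫ Y, gbmA n m rs rd Y i j * gbmA n m rs rd Y j k ∂GBMaux.gbmPi n
      else 0) ^ 2 ∂GBMaux.gbmPi n)
      = ∫ X, (∑ i : Fin n, ∑ j : Fin n, ∑ k : Fin n, g i j k X) ^ 2 ∂GBMaux.gbmPi n := rfl
  rw [hgoal]
  -- basic facts about the `T` and `c` pieces
  have hTmeas : ∀ i j k : Fin n,
      Measurable (fun X : Fin n → ℝ => gbmA n m rs rd X i j * gbmA n m rs rd X j k) :=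
    fun i j k => (measurable_gbmA i j).mul (measurable_gbmA j k)
  have hTbd : ∀ (i j k : Fin n) (X : Fin n → ℝ),
      |gbmA n m rs rd X i j * gbmA n m rs rd X j k| ≤ 1 := by
    intro i j k X
    rw [abs_of_nonneg (mul_nonneg (gbmA_nonneg X i j) (gbmA_nonneg X j k))]
    exact mul_le_one₀ (gbmA_le_one X i j) (gbmA_nonneg X j k) (gbmA_le_one X j k)
  have hTint : ∀ i j k : Fin n,
      Integrable (fun X : Fin n → ℝ => gbmA n m rs rd X i j * gbmA n m rs rd X j k)
        (GBMaux.gbmPi n) :=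
    fun i j k => integrable_of_bdd (hTmeas i j k) (hTbd i j k)
  have hgmeas : ∀ i j k : Fin n, Measurable (g i j k) := by
    intro i j k
    rw [hg]
    by_cases h : i ≠ j ∧ i ≠ k ∧ j ≠ k
    · simp only [if_pos h]
      exact (hTmeas i j k).sub measurable_const
    · simp only [if_neg h]
      exact measurable_const
  have hgbd : ∀ (i j k : Fin n) (X : Fin n → ℝ), |g i j k X| ≤ 2 := by
    intro i j k X
    rw [hg]
    by_cases h : i ≠ j ∧ i ≠ k ∧ j ≠ k
    · simp only [if_pos h]
      obtain ⟨hc0, hc1⟩ := intT_bounds hrd0 hrdrs hrs14 h.1 h.2.1 h.2.2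
      refine (abs_sub _ _).trans ?_
      have h1 := hTbd i j k X
      rw [abs_of_nonneg hc0]
      nlinarith
    · simp only [if_neg h]
      norm_num
  have hgint : ∀ t u : Fin n × Fin n × Fin n,
      Integrable (fun X => g t.1 t.2.1 t.2.2 X * g u.1 u.2.1 u.2.2 X) (GBMaux.gbmPi n) := by
    intro t u
    refine integrable_of_bdd ((hgmeas _ _ _).mul (hgmeas _ _ _)) (C := 4) fun X => ?_
    rw [abs_mul]
    nlinarith [hgbd t.1 t.2.1 t.2.2 X, hgbd u.1 u.2.1 u.2.2 X,
      abs_nonneg (g t.1 t.2.1 t.2.2 X), abs_nonneg (g u.1 u.2.1 u.2.2 X)]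
  -- expand the square of the sum
  have hsq : ∀ X : Fin n → ℝ, (∑ i : Fin n, ∑ j : Fin n, ∑ k : Fin n, g i j k X) ^ 2
      = ∑ t : Fin n × Fin n × Fin n, ∑ u : Fin n × Fin n × Fin n,
          g t.1 t.2.1 t.2.2 X * g u.1 u.2.1 u.2.2 X := by
    intro X
    have htr : (∑ i : Fin n, ∑ j : Fin n, ∑ k : Fin n, g i j k X)
        = ∑ t : Fin n × Fin n × Fin n, g t.1 t.2.1 t.2.2 X := by
      rw [Fintype.sum_prod_type]
      refine Finset.sum_congr rfl fun i _ => ?_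
      rw [Fintype.sum_prod_type]
    rw [sq, htr, Finset.sum_mul_sum]
  rw [integral_congr_ae (Filter.Eventually.of_forall hsq)]
  rw [integral_finset_sum _ (fun t _ => integrable_finset_sum _ (fun u _ => hgint t u))]
  have hswap : ∀ t : Fin n × Fin n × Fin n,
      (∫ X, ∑ u : Fin n × Fin n × Fin n,
        g t.1 t.2.1 t.2.2 X * g u.1 u.2.1 u.2.2 X ∂GBMaux.gbmPi n)
      = ∑ u : Fin n × Fin n × Fin n,
          ∫ X, g t.1 t.2.1 t.2.2 X * g u.1 u.2.1 u.2.2 X ∂GBMaux.gbmPi n :=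
    fun t => integral_finset_sum _ (fun u _ => hgint t u)
  simp_rw [hswap]
  -- per-term bound
  have hterm : ∀ i j k i' j' k' : Fin n,
      |∫ X, g i j k X * g i' j' k' X ∂GBMaux.gbmPi n|
        ≤ 12*rs^3 * ((if i' = i ∨ i' = j ∨ i' = k then (1:ℝ) else 0)
              * (if j' = i ∨ j' = j ∨ j' = k then (1:ℝ) else 0) * 1)
          + 12*rs^3 * ((if i' = i ∨ i' = j ∨ i' = k then (1:ℝ) else 0) * 1
              * (if k' = i ∨ k' = j ∨ k' = k then (1:ℝ) else 0))
          + 12*rs^3 * (1 * (if j' = i ∨ j' = j ∨ j' = k then (1:ℝ) else 0)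
              * (if k' = i ∨ k' = j ∨ k' = k then (1:ℝ) else 0))
          + 8*rs^2 * ((if i' = i ∨ i' = j ∨ i' = k then (1:ℝ) else 0)
              * (if j' = i ∨ j' = j ∨ j' = k then (1:ℝ) else 0)
              * (if k' = i ∨ k' = j ∨ k' = k then (1:ℝ) else 0)) := by
    intro i j k i' j' k'
    have hIf : ∀ (P : Prop) [Decidable P], (0:ℝ) ≤ if P then 1 else 0 := by
      intro P _; split <;> norm_num
    have hRHS0 : (0:ℝ) ≤ 12*rs^3 * ((if i' = i ∨ i' = j ∨ i' = k then (1:ℝ) else 0)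
              * (if j' = i ∨ j' = j ∨ j' = k then (1:ℝ) else 0) * 1)
          + 12*rs^3 * ((if i' = i ∨ i' = j ∨ i' = k then (1:ℝ) else 0) * 1
              * (if k' = i ∨ k' = j ∨ k' = k then (1:ℝ) else 0))
          + 12*rs^3 * (1 * (if j' = i ∨ j' = j ∨ j' = k then (1:ℝ) else 0)
              * (if k' = i ∨ k' = j ∨ k' = k then (1:ℝ) else 0))
          + 8*rs^2 * ((if i' = i ∨ i' = j ∨ i' = k then (1:ℝ) else 0)
              * (if j' = i ∨ j' = j ∨ j' = k then (1:ℝ) else 0)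
              * (if k' = i ∨ k' = j ∨ k' = k then (1:ℝ) else 0)) := by
      have h3 : (0:ℝ) ≤ 12*rs^3 := by positivity
      have h2 : (0:ℝ) ≤ 8*rs^2 := by positivity
      refine add_nonneg (add_nonneg (add_nonneg ?_ ?_) ?_) ?_
      · exact mul_nonneg h3 (mul_nonneg (mul_nonneg (hIf _) (hIf _)) zero_le_one)
      · exact mul_nonneg h3 (mul_nonneg (mul_nonneg (hIf _) zero_le_one) (hIf _))
      · exact mul_nonneg h3 (mul_nonneg (mul_nonneg zero_le_one (hIf _)) (hIf _))
      · exact mul_nonneg h2 (mul_nonneg (mul_nonneg (hIf _) (hIf _)) (hIf _))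
    by_cases hd : i ≠ j ∧ i ≠ k ∧ j ≠ k
    swap
    · have : g i j k = fun _ => (0:ℝ) := by
        rw [hg]; simp only [if_neg hd]
      rw [this]
      simp only [zero_mul, integral_zero, abs_zero]
      exact hRHS0
    by_cases hd' : i' ≠ j' ∧ i' ≠ k' ∧ j' ≠ k'
    swap
    · have : g i' j' k' = fun _ => (0:ℝ) := by
        rw [hg]; simp only [if_neg hd']
      rw [this]
      simp only [mul_zero, integral_zero, abs_zero]
      exact hRHS0
    obtain ⟨hij, hik, hjk⟩ := hd
    obtain ⟨hIJ, hIK, hJK⟩ := hd'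
    -- covariance form
    have hgg : ∫ X, g i j k X * g i' j' k' X ∂GBMaux.gbmPi n
        = (∫ X, (gbmA n m rs rd X i j * gbmA n m rs rd X j k) *
            (gbmA n m rs rd X i' j' * gbmA n m rs rd X j' k') ∂GBMaux.gbmPi n)
          - (∫ X, gbmA n m rs rd X i j * gbmA n m rs rd X j k ∂GBMaux.gbmPi n) *
            (∫ X, gbmA n m rs rd X i' j' * gbmA n m rs rd X j' k' ∂GBMaux.gbmPi n) := by
      have hd3 : i ≠ j ∧ i ≠ k ∧ j ≠ k := ⟨hij, hik, hjk⟩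
      have hd3' : i' ≠ j' ∧ i' ≠ k' ∧ j' ≠ k' := ⟨hIJ, hIK, hJK⟩
      have h1 : g i j k = fun X => gbmA n m rs rd X i j * gbmA n m rs rd X j k
          - ∫ Y, gbmA n m rs rd Y i j * gbmA n m rs rd Y j k ∂GBMaux.gbmPi n := by
        rw [hg]; funext X; simp only [if_pos hd3]
      have h2 : g i' j' k' = fun X => gbmA n m rs rd X i' j' * gbmA n m rs rd X j' k'
          - ∫ Y, gbmA n m rs rd Y i' j' * gbmA n m rs rd Y j' k' ∂GBMaux.gbmPi n := by
        rw [hg]; funext X; simp only [if_pos hd3']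
      rw [h1, h2]
      exact cov_expand (hTint i j k) (hTint i' j' k') (integrable_of_bdd
        ((hTmeas i j k).mul (hTmeas i' j' k')) (C := 1) (fun X => by
          rw [abs_mul]
          nlinarith [hTbd i j k X, hTbd i' j' k' X,
            abs_nonneg (gbmA n m rs rd X i j * gbmA n m rs rd X j k),
            abs_nonneg (gbmA n m rs rd X i' j' * gbmA n m rs rd X j' k')]))
    rw [hgg]
    have hc1 := intT_eq (m := m) hrd0 hrdrs hrs14 hij hik hjk
    have hc2 := intT_eq (m := m) hrd0 hrdrs hrs14 hIJ hIK hJK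
    have hb1 := intT_bounds (m := m) hrd0 hrdrs hrs14 hij hik hjk
    have hb2 := intT_bounds (m := m) hrd0 hrdrs hrs14 hIJ hIK hJK
    have hTTnn : 0 ≤ ∫ X, (gbmA n m rs rd X i j * gbmA n m rs rd X j k) *
        (gbmA n m rs rd X i' j' * gbmA n m rs rd X j' k') ∂GBMaux.gbmPi n := by
      refine integral_nonneg fun X => ?_
      exact mul_nonneg (mul_nonneg (gbmA_nonneg X i j) (gbmA_nonneg X j k))
        (mul_nonneg (gbmA_nonneg X i' j') (gbmA_nonneg X j' k'))
    have hccnn : 0 ≤ (∫ X, gbmA n m rs rd X i j * gbmA n m rs rd X j k ∂GBMaux.gbmPi n) *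
        (∫ X, gbmA n m rs rd X i' j' * gbmA n m rs rd X j' k' ∂GBMaux.gbmPi n) :=
      mul_nonneg hb1.1 hb2.1
    have hccle : (∫ X, gbmA n m rs rd X i j * gbmA n m rs rd X j k ∂GBMaux.gbmPi n) *
        (∫ X, gbmA n m rs rd X i' j' * gbmA n m rs rd X j' k' ∂GBMaux.gbmPi n)
          ≤ 16 * rs^4 := by
      nlinarith [hb1.1, hb1.2, hb2.1, hb2.2]
    by_cases bI : i' = i ∨ i' = j ∨ i' = k <;>
      by_cases bJ : j' = i ∨ j' = j ∨ j' = k <;>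
        by_cases bK : k' = i ∨ k' = j ∨ k' = k
    · -- TTT : share = 3
      have h3 := intTT_le3 (m := m) hrd0 hrdrs hrs14 hij hik hjk hIJ hJK
      rw [if_pos bI, if_pos bJ, if_pos bK]
      refine (abs_sub _ _).trans ?_
      rw [abs_of_nonneg hTTnn, abs_of_nonneg hccnn]
      nlinarith
    · -- TTF : k' fresh
      have hKf : k' ≠ i ∧ k' ≠ j ∧ k' ≠ k := by simpa [not_or] using bK
      have h2 := intTT_le2 (m := m) hrd0 hrdrs hrs14 hij hik hjk hIJ hIK hJK (Or.inr (Or.inr hKf))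
      rw [if_pos bI, if_pos bJ, if_neg bK]
      refine (abs_sub _ _).trans ?_
      rw [abs_of_nonneg hTTnn, abs_of_nonneg hccnn]
      nlinarith
    · -- TFT : j' fresh
      have hJf : j' ≠ i ∧ j' ≠ j ∧ j' ≠ k := by simpa [not_or] using bJ
      have h2 := intTT_le2 (m := m) hrd0 hrdrs hrs14 hij hik hjk hIJ hIK hJK (Or.inr (Or.inl hJf))
      rw [if_pos bI, if_neg bJ, if_pos bK]
      refine (abs_sub _ _).trans ?_
      rw [abs_of_nonneg hTTnn, abs_of_nonneg hccnn]
      nlinarith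
    · -- TFF : j', k' fresh : independent
      have hJf : j' ≠ i ∧ j' ≠ j ∧ j' ≠ k := by simpa [not_or] using bJ
      have hKf : k' ≠ i ∧ k' ≠ j ∧ k' ≠ k := by simpa [not_or] using bK
      rw [covTT_eq hrd0 hrdrs hrs14 hij hik hjk hIJ hIK hJK (Or.inl ⟨hJf, hKf⟩), hc1, hc2]
      simp only [sub_self, abs_zero]
      exact hRHS0
    · -- FTT : i' fresh
      have hIf : i' ≠ i ∧ i' ≠ j ∧ i' ≠ k := by simpa [not_or] using bI
      have h2 := intTT_le2 (m := m) hrd0 hrdrs hrs14 hij hik hjk hIJ hIK hJK (Or.inl hIf)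
      rw [if_neg bI, if_pos bJ, if_pos bK]
      refine (abs_sub _ _).trans ?_
      rw [abs_of_nonneg hTTnn, abs_of_nonneg hccnn]
      nlinarith
    · -- FTF : i', k' fresh
      have hIf : i' ≠ i ∧ i' ≠ j ∧ i' ≠ k := by simpa [not_or] using bI
      have hKf : k' ≠ i ∧ k' ≠ j ∧ k' ≠ k := by simpa [not_or] using bK
      rw [covTT_eq hrd0 hrdrs hrs14 hij hik hjk hIJ hIK hJK (Or.inr (Or.inl ⟨hIf, hKf⟩)),
        hc1, hc2]
      simp only [sub_self, abs_zero]
      exact hRHS0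
    · -- FFT : i', j' fresh
      have hIf : i' ≠ i ∧ i' ≠ j ∧ i' ≠ k := by simpa [not_or] using bI
      have hJf : j' ≠ i ∧ j' ≠ j ∧ j' ≠ k := by simpa [not_or] using bJ
      rw [covTT_eq hrd0 hrdrs hrs14 hij hik hjk hIJ hIK hJK (Or.inr (Or.inr ⟨hIf, hJf⟩)),
        hc1, hc2]
      simp only [sub_self, abs_zero]
      exact hRHS0
    · -- FFF
      have hJf : j' ≠ i ∧ j' ≠ j ∧ j' ≠ k := by simpa [not_or] using bJ
      have hKf : k' ≠ i ∧ k' ≠ j ∧ k' ≠ k := by simpa [not_or] using bK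
      rw [covTT_eq hrd0 hrdrs hrs14 hij hik hjk hIJ hIK hJK (Or.inl ⟨hJf, hKf⟩), hc1, hc2]
      simp only [sub_self, abs_zero]
      exact hRHS0
  -- now sum the bounds
  have htuple : ∀ f : Fin n → Fin n → Fin n → ℝ,
      ∑ u : Fin n × Fin n × Fin n, f u.1 u.2.1 u.2.2 = ∑ a, ∑ b, ∑ c, f a b c := by
    intro f
    rw [Fintype.sum_prod_type]
    exact Finset.sum_congr rfl fun a _ => by rw [Fintype.sum_prod_type]
  have hN : (∑ _x : Fin n, (1:ℝ)) = n := by simp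
  have hSfact : ∀ (f1 f2 f3 : Fin n → ℝ),
      ∑ u : Fin n × Fin n × Fin n, f1 u.1 * f2 u.2.1 * f3 u.2.2
        = (∑ x, f1 x) * (∑ x, f2 x) * (∑ x, f3 x) := by
    intro f1 f2 f3
    rw [htuple fun a b c => f1 a * f2 b * f3 c]
    exact sum_factor f1 f2 f3
  have hinner : ∀ i j k : Fin n,
      (∑ u : Fin n × Fin n × Fin n,
        (12*rs^3 * ((if u.1 = i ∨ u.1 = j ∨ u.1 = k then (1:ℝ) else 0)
              * (if u.2.1 = i ∨ u.2.1 = j ∨ u.2.1 = k then (1:ℝ) else 0) * 1)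
          + 12*rs^3 * ((if u.1 = i ∨ u.1 = j ∨ u.1 = k then (1:ℝ) else 0) * 1
              * (if u.2.2 = i ∨ u.2.2 = j ∨ u.2.2 = k then (1:ℝ) else 0))
          + 12*rs^3 * (1 * (if u.2.1 = i ∨ u.2.1 = j ∨ u.2.1 = k then (1:ℝ) else 0)
              * (if u.2.2 = i ∨ u.2.2 = j ∨ u.2.2 = k then (1:ℝ) else 0))
          + 8*rs^2 * ((if u.1 = i ∨ u.1 = j ∨ u.1 = k then (1:ℝ) else 0)
              * (if u.2.1 = i ∨ u.2.1 = j ∨ u.2.1 = k then (1:ℝ) else 0)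
              * (if u.2.2 = i ∨ u.2.2 = j ∨ u.2.2 = k then (1:ℝ) else 0))))
        ≤ 324*(n:ℝ)*rs^3 + 216*rs^2 := by
    intro i j k
    set S := ∑ x : Fin n, (if x = i ∨ x = j ∨ x = k then (1:ℝ) else 0) with hSdef
    have hS3 : S ≤ 3 := cnt_le_three i j k
    have hS0 : 0 ≤ S := cnt_nonneg i j k
    have hn0 : (0:ℝ) ≤ n := Nat.cast_nonneg n
    have hsum : (∑ u : Fin n × Fin n × Fin n,
        (12*rs^3 * ((if u.1 = i ∨ u.1 = j ∨ u.1 = k then (1:ℝ) else 0)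
              * (if u.2.1 = i ∨ u.2.1 = j ∨ u.2.1 = k then (1:ℝ) else 0) * 1)
          + 12*rs^3 * ((if u.1 = i ∨ u.1 = j ∨ u.1 = k then (1:ℝ) else 0) * 1
              * (if u.2.2 = i ∨ u.2.2 = j ∨ u.2.2 = k then (1:ℝ) else 0))
          + 12*rs^3 * (1 * (if u.2.1 = i ∨ u.2.1 = j ∨ u.2.1 = k then (1:ℝ) else 0)
              * (if u.2.2 = i ∨ u.2.2 = j ∨ u.2.2 = k then (1:ℝ) else 0))
          + 8*rs^2 * ((if u.1 = i ∨ u.1 = j ∨ u.1 = k then (1:ℝ) else 0)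
              * (if u.2.1 = i ∨ u.2.1 = j ∨ u.2.1 = k then (1:ℝ) else 0)
              * (if u.2.2 = i ∨ u.2.2 = j ∨ u.2.2 = k then (1:ℝ) else 0))))
        = 12*rs^3 * (S * S * (n:ℝ)) + 12*rs^3 * (S * (n:ℝ) * S)
          + 12*rs^3 * ((n:ℝ) * S * S) + 8*rs^2 * (S * S * S) := by
      rw [Finset.sum_add_distrib, Finset.sum_add_distrib, Finset.sum_add_distrib,
        ← Finset.mul_sum, ← Finset.mul_sum, ← Finset.mul_sum, ← Finset.mul_sum,
        hSfact (fun x => if x = i ∨ x = j ∨ x = k then (1:ℝ) else 0)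
          (fun x => if x = i ∨ x = j ∨ x = k then (1:ℝ) else 0) (fun _ => (1:ℝ)),
        hSfact (fun x => if x = i ∨ x = j ∨ x = k then (1:ℝ) else 0) (fun _ => (1:ℝ))
          (fun x => if x = i ∨ x = j ∨ x = k then (1:ℝ) else 0),
        hSfact (fun _ => (1:ℝ)) (fun x => if x = i ∨ x = j ∨ x = k then (1:ℝ) else 0)
          (fun x => if x = i ∨ x = j ∨ x = k then (1:ℝ) else 0),
        hSfact (fun x => if x = i ∨ x = j ∨ x = k then (1:ℝ) else 0)
          (fun x => if x = i ∨ x = j ∨ x = k then (1:ℝ) else 0)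
          (fun x => if x = i ∨ x = j ∨ x = k then (1:ℝ) else 0),
        hN]
    rw [hsum]
    have hrs3 : (0:ℝ) ≤ rs^3 := by positivity
    have hrs2 : (0:ℝ) ≤ rs^2 := by positivity
    nlinarith [mul_le_mul hS3 hS3 hS0 (by norm_num : (0:ℝ) ≤ 3),
      mul_nonneg (mul_nonneg hS0 hS0) hn0, mul_nonneg (mul_nonneg hS0 hS0) hS0,
      mul_nonneg hrs3 (mul_nonneg (mul_nonneg hS0 hS0) hn0),
      mul_le_mul_of_nonneg_right (mul_le_mul hS3 hS3 hS0 (by norm_num : (0:ℝ) ≤ 3)) hn0,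
      mul_le_mul (mul_le_mul hS3 hS3 hS0 (by norm_num : (0:ℝ) ≤ 3)) hS3 hS0
        (by norm_num : (0:ℝ) ≤ 3*3)]
  calc ∑ t : Fin n × Fin n × Fin n, ∑ u : Fin n × Fin n × Fin n,
        ∫ X, g t.1 t.2.1 t.2.2 X * g u.1 u.2.1 u.2.2 X ∂GBMaux.gbmPi n
      ≤ ∑ t : Fin n × Fin n × Fin n, (324*(n:ℝ)*rs^3 + 216*rs^2) := by
        refine Finset.sum_le_sum fun t _ => ?_
        refine le_trans (Finset.sum_le_sum fun u _ =>
          (le_abs_self _).trans (hterm t.1 t.2.1 t.2.2 u.1 u.2.1 u.2.2)) ?_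
        exact hinner t.1 t.2.1 t.2.2
    _ = ((n:ℝ)^3) * (324*(n:ℝ)*rs^3 + 216*rs^2) := by
        rw [Finset.sum_const, Finset.card_univ]
        simp only [Fintype.card_prod, Fintype.card_fin, nsmul_eq_mul]
        push_cast
        ring
    _ ≤ 324 * ((n:ℝ) ^ 4 * rs ^ 3 + (n:ℝ) ^ 3 * rs ^ 2) := by
        have hn0 : (0:ℝ) ≤ n := Nat.cast_nonneg n
        have h1 : (0:ℝ) ≤ (n:ℝ)^3 * rs^2 := by positivity
        nlinarith [h1]
end
end

section
/- Define g(λ,τ) = ([3 − 9τ(1−τ)]λ² + 3τ(1−τ)(4λ − λ²)) / ([4 − 12τ(1−τ)]λ² + 8τ(1−τ)λ + 4τ(1−τ)) for λ ∈ [1,2), and g(λ,τ) = ([3 − 9τ(1−τ)]λ² + 12τ(1−τ)) / ([4 − 12τ(1−τ)]λ² + 8τ(1−τ)λ + 4τ(1−τ)) for λ ≥ 2. For every fixed τ ∈ (0,1), set λ* = 3/2 + (1/2)·√((9 − 11τ(1−τ))/(1 − 3τ(1−τ))). Then: (i) the function λ ↦ g(λ,τ) is decreasing on [1, λ*] and increasing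 on [λ*, ∞); (ii) g(λ,τ) < 3/4 for every λ > 1 and τ ∈ (0,1); (iii) for λ ≥ 1 and τ ∈ [0,1], g(λ,τ) = 3/4 if and only if λ = 1 or τ ∈ {0,1}. -/
noncomputable section

/-- The limit function `g(λ, τ)` of the global clustering coefficient when
`r_s = λ r_d`. -/
def gfun (l τ : ℝ) : ℝ :=
  if l < 2 then
    ((3 - 9 * τ * (1 - τ)) * l ^ 2 + 3 * τ * (1 - τ) * (4 * l - l ^ 2)) /
      ((4 - 12 * τ * (1 - τ)) * l ^ 2 + 8 * τ * (1 - τ) * l + 4 * τ * (1 - τ))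
  else
    ((3 - 9 * τ * (1 - τ)) * l ^ 2 + 12 * τ * (1 - τ)) /
      ((4 - 12 * τ * (1 - τ)) * l ^ 2 + 8 * τ * (1 - τ) * l + 4 * τ * (1 - τ))

/-- The location `λ* = 3/2 + (1/2)√((9 − 11τ(1−τ))/(1 − 3τ(1−τ)))` of the minimum
of `λ ↦ g(λ, τ)`. -/
def lamStar (τ : ℝ) : ℝ :=
  3 / 2 + (1 / 2) * Real.sqrt ((9 - 11 * τ * (1 - τ)) / (1 - 3 * τ * (1 - τ)))

private lemma Dpos (τ l : ℝ) (h0 : 0 ≤ τ) (h1 : τ ≤ 1) (hl : 1 ≤ l) :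
    0 < (4 - 12 * τ * (1 - τ)) * l ^ 2 + 8 * τ * (1 - τ) * l + 4 * τ * (1 - τ) := by
  have hs : 0 ≤ τ * (1 - τ) := mul_nonneg h0 (by linarith)
  have hs4 : τ * (1 - τ) ≤ 1/4 := by nlinarith [sq_nonneg (2*τ - 1)]
  nlinarith [mul_nonneg (by linarith : (0:ℝ) ≤ 4 - 12*(τ*(1-τ))) (by nlinarith : (0:ℝ) ≤ l^2 - 1),
    mul_nonneg hs (by linarith : (0:ℝ) ≤ l)]

private lemma gfun_of_le (τ l : ℝ) (hl : l ≤ 2) :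
    gfun l τ = ((3 - 12*τ*(1-τ)) * l ^ 2 + 12*τ*(1-τ)*l) /
      ((4 - 12 * τ * (1 - τ)) * l ^ 2 + 8 * τ * (1 - τ) * l + 4 * τ * (1 - τ)) := by
  unfold gfun
  rcases lt_or_eq_of_le hl with h | h
  · rw [if_pos h]; ring_nf
  · subst h; norm_num; ring_nf

private lemma gfun_of_ge (τ l : ℝ) (hl : 2 ≤ l) :
    gfun l τ = ((3 - 9*τ*(1-τ)) * l ^ 2 + 12*τ*(1-τ)) /
      ((4 - 12 * τ * (1 - τ)) * l ^ 2 + 8 * τ * (1 - τ) * l + 4 * τ * (1 - τ)) := by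
  unfold gfun
  rw [if_neg (not_lt.mpr hl)]

private lemma lamStar_facts (τ : ℝ) (h0 : 0 ≤ τ) (h1 : τ ≤ 1) :
    3 ≤ lamStar τ ∧
      (1 - 3*(τ*(1-τ))) * ((lamStar τ)^2 - 3*(lamStar τ)) = 4*(τ*(1-τ)) := by
  have hs : 0 ≤ τ * (1 - τ) := mul_nonneg h0 (by linarith)
  have hs4 : τ * (1 - τ) ≤ 1/4 := by nlinarith [sq_nonneg (2*τ - 1)]
  have h13 : 0 < 1 - 3 * τ * (1 - τ) := by nlinarith
  have hK9 : (9:ℝ) ≤ (9 - 11 * τ * (1 - τ)) / (1 - 3 * τ * (1 - τ)) := by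
    rw [le_div_iff₀ h13]; nlinarith
  have hK0 : (0:ℝ) ≤ (9 - 11 * τ * (1 - τ)) / (1 - 3 * τ * (1 - τ)) := by linarith
  have h3 : (3:ℝ) ≤ Real.sqrt ((9 - 11 * τ * (1 - τ)) / (1 - 3 * τ * (1 - τ))) := by
    exact (Real.le_sqrt' (by norm_num)).mpr (by nlinarith)
  constructor
  · unfold lamStar; linarith
  · have hsq : (2 * lamStar τ - 3)^2 = (9 - 11 * τ * (1 - τ)) / (1 - 3 * τ * (1 - τ)) := by
      unfold lamStar
      rw [show 2 * (3 / 2 + (1 / 2) * Real.sqrt ((9 - 11 * τ * (1 - τ)) / (1 - 3 * τ * (1 - τ)))) - 3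
          = Real.sqrt ((9 - 11 * τ * (1 - τ)) / (1 - 3 * τ * (1 - τ))) by ring]
      exact Real.sq_sqrt hK0
    have h2 : (1 - 3 * τ * (1 - τ)) * (2 * lamStar τ - 3)^2 = 9 - 11 * τ * (1 - τ) := by
      rw [hsq]; field_simp
    linear_combination h2 / 4

private lemma gA (τ x y : ℝ) (hτ0 : 0 < τ) (hτ1 : τ < 1)
    (hx : 1 ≤ x) (hxy : x < y) (hy : y ≤ 2) : gfun y τ < gfun x τ := by
  have hs : 0 < τ * (1 - τ) := mul_pos hτ0 (by linarith)
  have hs4 : τ * (1 - τ) ≤ 1/4 := by nlinarith [sq_nonneg (2*τ - 1)]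
  have hDx := Dpos τ x hτ0.le hτ1.le hx
  have hDy := Dpos τ y hτ0.le hτ1.le (by linarith)
  rw [gfun_of_le τ x (by linarith), gfun_of_le τ y hy, div_lt_div_iff₀ hDy hDx]
  have hQ : 0 < (8 - 16*(τ*(1-τ)))*(x*y) - (4 - 16*(τ*(1-τ)))*(x+y) - 16*(τ*(1-τ)) := by
    nlinarith [mul_nonneg (by linarith : (0:ℝ) ≤ x - 1) (by linarith : (0:ℝ) ≤ y - 1),
      mul_nonneg (by linarith : (0:ℝ) ≤ 1 - 4*(τ*(1-τ)))
        (mul_nonneg (by linarith : (0:ℝ) ≤ x - 1) (by linarith : (0:ℝ) ≤ y - 1))]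
  nlinarith [mul_pos (mul_pos hs (by linarith : (0:ℝ) < y - x)) hQ]

private lemma gB (τ x y : ℝ) (hτ0 : 0 < τ) (hτ1 : τ < 1)
    (hx : 2 ≤ x) (hxy : x < y) (hy : y ≤ lamStar τ) : gfun y τ < gfun x τ := by
  obtain ⟨hm3, hid⟩ := lamStar_facts τ hτ0.le hτ1.le
  set m := lamStar τ with hm
  have hs : 0 < τ * (1 - τ) := mul_pos hτ0 (by linarith)
  have hs4 : τ * (1 - τ) ≤ 1/4 := by nlinarith [sq_nonneg (2*τ - 1)]
  have hDx := Dpos τ x hτ0.le hτ1.le (by linarith)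
  have hDy := Dpos τ y hτ0.le hτ1.le (by linarith)
  rw [gfun_of_ge τ x hx, gfun_of_ge τ y (by linarith), div_lt_div_iff₀ hDy hDx]
  have hb : 0 < (m - x)*(2*y - 3) + (m - y)*(2*m - 3) := by
    nlinarith [mul_pos (by linarith : (0:ℝ) < m - x) (by linarith : (0:ℝ) < 2*y - 3),
      mul_nonneg (by linarith : (0:ℝ) ≤ m - y) (by linarith : (0:ℝ) ≤ 2*m - 3)]
  have key : ((3 - 9*τ*(1-τ)) * y ^ 2 + 12*τ*(1-τ)) *
        ((4 - 12 * τ * (1 - τ)) * x ^ 2 + 8 * τ * (1 - τ) * x + 4 * τ * (1 - τ))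
      - ((3 - 9*τ*(1-τ)) * x ^ 2 + 12*τ*(1-τ)) *
        ((4 - 12 * τ * (1 - τ)) * y ^ 2 + 8 * τ * (1 - τ) * y + 4 * τ * (1 - τ))
      = -3*(τ*(1-τ))*(y - x)*((4 - 12*(τ*(1-τ)))*((m - x)*(2*y - 3) + (m - y)*(2*m - 3))) := by
    linear_combination (24*(τ*(1-τ))*(y - x)) * hid
  nlinarith [mul_pos (mul_pos hs (by linarith : (0:ℝ) < y - x))
    (mul_pos (by linarith : (0:ℝ) < 4 - 12*(τ*(1-τ))) hb), key]

private lemma gC (τ x y : ℝ) (hτ0 : 0 < τ) (hτ1 : τ < 1)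
    (hx : lamStar τ ≤ x) (hxy : x < y) : gfun x τ < gfun y τ := by
  obtain ⟨hm3, hid⟩ := lamStar_facts τ hτ0.le hτ1.le
  set m := lamStar τ with hm
  have hs : 0 < τ * (1 - τ) := mul_pos hτ0 (by linarith)
  have hs4 : τ * (1 - τ) ≤ 1/4 := by nlinarith [sq_nonneg (2*τ - 1)]
  have hDx := Dpos τ x hτ0.le hτ1.le (by linarith)
  have hDy := Dpos τ y hτ0.le hτ1.le (by linarith)
  rw [gfun_of_ge τ x (by linarith), gfun_of_ge τ y (by linarith), div_lt_div_iff₀ hDx hDy]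
  have hb : (m - x)*(2*y - 3) + (m - y)*(2*m - 3) < 0 := by
    nlinarith [mul_nonneg (by linarith : (0:ℝ) ≤ x - m) (by linarith : (0:ℝ) ≤ 2*y - 3),
      mul_pos (by linarith : (0:ℝ) < y - m) (by linarith : (0:ℝ) < 2*m - 3)]
  have key : ((3 - 9*τ*(1-τ)) * y ^ 2 + 12*τ*(1-τ)) *
        ((4 - 12 * τ * (1 - τ)) * x ^ 2 + 8 * τ * (1 - τ) * x + 4 * τ * (1 - τ))
      - ((3 - 9*τ*(1-τ)) * x ^ 2 + 12*τ*(1-τ)) *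
        ((4 - 12 * τ * (1 - τ)) * y ^ 2 + 8 * τ * (1 - τ) * y + 4 * τ * (1 - τ))
      = -3*(τ*(1-τ))*(y - x)*((4 - 12*(τ*(1-τ)))*((m - x)*(2*y - 3) + (m - y)*(2*m - 3))) := by
    linear_combination (24*(τ*(1-τ))*(y - x)) * hid
  nlinarith [mul_pos (mul_pos hs (by linarith : (0:ℝ) < y - x))
    (mul_pos (by linarith : (0:ℝ) < 4 - 12*(τ*(1-τ))) (by linarith : (0:ℝ) < -((m - x)*(2*y - 3) + (m - y)*(2*m - 3)))), key]

/-- Properties of the limit function `g(λ, τ)`: for fixed `τ ∈ (0,1)`, `g` is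
decreasing in `λ` on `[1, λ*]` and increasing on `[λ*, ∞)`; `g(λ, τ) < 3/4` for
all `λ > 1` and `τ ∈ (0,1)`; and for `λ ≥ 1`, `τ ∈ [0,1]`, `g(λ, τ) = 3/4` if
and only if `λ = 1` or `τ ∈ {0, 1}`. -/
theorem gfun_properties :
    (∀ τ : ℝ, τ ∈ Set.Ioo (0 : ℝ) 1 →
      StrictAntiOn (fun l => gfun l τ) (Set.Icc 1 (lamStar τ)) ∧
      StrictMonoOn (fun l => gfun l τ) (Set.Ici (lamStar τ))) ∧
    (∀ l τ : ℝ, 1 < l → τ ∈ Set.Ioo (0 : ℝ) 1 → gfun l τ < 3 / 4) ∧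
    (∀ l τ : ℝ, 1 ≤ l → τ ∈ Set.Icc (0 : ℝ) 1 →
      (gfun l τ = 3 / 4 ↔ l = 1 ∨ τ = 0 ∨ τ = 1)) := by
  refine ⟨?_, ?_, ?_⟩
  · rintro τ ⟨hτ0, hτ1⟩
    obtain ⟨hm3, -⟩ := lamStar_facts τ hτ0.le hτ1.le
    constructor
    · intro x hx y hy hxy
      simp only [Set.mem_Icc] at hx hy
      by_cases hy2 : y ≤ 2
      · exact gA τ x y hτ0 hτ1 hx.1 hxy hy2
      · by_cases hx2 : 2 ≤ x
        · exact gB τ x y hτ0 hτ1 hx2 hxy hy.2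
        · exact (gB τ 2 y hτ0 hτ1 le_rfl (not_le.mp hy2) hy.2).trans
            (gA τ x 2 hτ0 hτ1 hx.1 (not_le.mp hx2) le_rfl)
    · intro x hx y hy hxy
      exact gC τ x y hτ0 hτ1 (Set.mem_Ici.mp hx) hxy
  · rintro l τ hl ⟨hτ0, hτ1⟩
    have hs : 0 < τ * (1 - τ) := mul_pos hτ0 (by linarith)
    have hD := Dpos τ l hτ0.le hτ1.le hl.le
    by_cases h2 : l ≤ 2
    · rw [gfun_of_le τ l h2, div_lt_iff₀ hD]
      nlinarith [mul_pos hs (mul_pos (by linarith : (0:ℝ) < l - 1) (by linarith : (0:ℝ) < l - 1))]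
    · rw [gfun_of_ge τ l (by linarith), div_lt_iff₀ hD]
      nlinarith [mul_pos hs (by linarith : (0:ℝ) < 2*l - 3)]
  · rintro l τ hl ⟨hτ0, hτ1⟩
    have hD := Dpos τ l hτ0 hτ1 hl
    constructor
    · intro h
      by_cases h2 : l ≤ 2
      · rw [gfun_of_le τ l h2, div_eq_iff (ne_of_gt hD)] at h
        have hz : τ * (1 - τ) * (l - 1)^2 = 0 := by linear_combination (-1/3) * h
        rcases mul_eq_zero.mp hz with hz | hz
        · rcases mul_eq_zero.mp hz with hz | hz
          · exact Or.inr (Or.inl hz)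
          · exact Or.inr (Or.inr (by linarith))
        · exact Or.inl (by nlinarith [sq_nonneg (l-1)])
      · rw [gfun_of_ge τ l (by linarith), div_eq_iff (ne_of_gt hD)] at h
        have hz : τ * (1 - τ) * (2*l - 3) = 0 := by linear_combination (-1/3) * h
        have h23 : (2:ℝ)*l - 3 ≠ 0 := by intro hc; linarith [not_le.mp h2]
        rcases mul_eq_zero.mp hz with hz | hz
        · rcases mul_eq_zero.mp hz with hz | hz
          · exact Or.inr (Or.inl hz)
          · exact Or.inr (Or.inr (by linarith))
        · exact absurd hz h23
    · rintro (rfl | rfl | rfl)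
      · rw [gfun_of_le τ 1 (by norm_num)]
        rw [show ((3:ℝ) - 12*τ*(1-τ)) * 1 ^ 2 + 12*τ*(1-τ)*1 = 3 by ring,
          show ((4:ℝ) - 12 * τ * (1 - τ)) * 1 ^ 2 + 8 * τ * (1 - τ) * 1 + 4 * τ * (1 - τ) = 4 by ring]
      · by_cases h2 : l ≤ 2
        · rw [gfun_of_le 0 l h2]
          rw [show ((3:ℝ) - 12*0*(1-0)) * l ^ 2 + 12*0*(1-0)*l = 3*l^2 by ring,
            show ((4:ℝ) - 12 * 0 * (1 - 0)) * l ^ 2 + 8 * 0 * (1 - 0) * l + 4 * 0 * (1 - 0) = 4*l^2 by ring]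
          rw [div_eq_div_iff (by positivity) (by norm_num)]; ring
        · rw [gfun_of_ge 0 l (by linarith)]
          rw [show ((3:ℝ) - 9*0*(1-0)) * l ^ 2 + 12*0*(1-0) = 3*l^2 by ring,
            show ((4:ℝ) - 12 * 0 * (1 - 0)) * l ^ 2 + 8 * 0 * (1 - 0) * l + 4 * 0 * (1 - 0) = 4*l^2 by ring]
          rw [div_eq_div_iff (by positivity) (by norm_num)]; ring
      · by_cases h2 : l ≤ 2
        · rw [gfun_of_le 1 l h2]
          rw [show ((3:ℝ) - 12*1*(1-1)) * l ^ 2 + 12*1*(1-1)*l = 3*l^2 by ring,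
            show ((4:ℝ) - 12 * 1 * (1 - 1)) * l ^ 2 + 8 * 1 * (1 - 1) * l + 4 * 1 * (1 - 1) = 4*l^2 by ring]
          rw [div_eq_div_iff (by positivity) (by norm_num)]; ring
        · rw [gfun_of_ge 1 l (by linarith)]
          rw [show ((3:ℝ) - 9*1*(1-1)) * l ^ 2 + 12*1*(1-1) = 3*l^2 by ring,
            show ((4:ℝ) - 12 * 1 * (1 - 1)) * l ^ 2 + 8 * 1 * (1 - 1) * l + 4 * 1 * (1 - 1) = 4*l^2 by ring]
          rw [div_eq_div_iff (by positivity) (by norm_num)]; ring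
end
end
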